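/- arXiv:1906.10537 — 8 statements merged into one kernel-verified Lean document; each statement's English description precedes it below -/
import Mathlib

section
/- For every integer n ≥ 2 and all positive real numbers a and b, the determinant of D_n(a,b) satisfies the recurrence det D_n(a,b) = -a·det D_{n-1}(a,b) - a·b·det D_{n-2}(a,b) - b³·det D_{n-3}(a,b), where by convention det D_0(a,b) = 1 and det D_{-1}(a,b) = 0. -/
/-- The `n × n` matrix `D_n(a,b)` (rows and columns indexed by `Fin n`, i.e. `0,…,n-1`):
column `j` has entry `-a` on the diagonal, `b` just above the diagonal,
`a` just below the diagonal and `-b` two below the diagonal. -/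
def Dmat (n : ℕ) (a b : ℝ) : Matrix (Fin n) (Fin n) ℝ :=
  Matrix.of fun i j =>
    if (i : ℕ) = (j : ℕ) then -a
    else if (i : ℕ) + 1 = (j : ℕ) then b
    else if (i : ℕ) = (j : ℕ) + 1 then a
    else if (i : ℕ) = (j : ℕ) + 2 then -b
    else 0

/-- `det D_m(a,b)` extended to integer indices, with the convention that
`det D_m(a,b) = 0` for `m < 0` (and `det D_0(a,b) = 1`, the determinant of the
empty matrix). -/
noncomputable def dZ (a b : ℝ) (m : ℤ) : ℝ :=
  if 0 ≤ m then (Dmat m.toNat a b).det else 0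

/-- The band function giving the entries of `Dmat`. -/
def band (a b : ℝ) (i j : ℕ) : ℝ :=
  if i = j then -a else if i + 1 = j then b
  else if i = j + 1 then a else if i = j + 2 then -b else 0

lemma Dmat_apply (n : ℕ) (a b : ℝ) (i j : Fin n) :
    Dmat n a b i j = band a b (i : ℕ) (j : ℕ) := rfl

lemma band_shift (a b : ℝ) (i j : ℕ) : band a b (i + 1) (j + 1) = band a b i j := by
  simp only [band]
  split_ifs <;> first | rfl | (exfalso; first | assumption | omega)

def Cmat (m : ℕ) (a b : ℝ) : Matrix (Fin m) (Fin m) ℝ :=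
  Matrix.of fun i j => band a b ((i : ℕ) + 1) (if (j : ℕ) = 0 then 0 else (j : ℕ) + 1)

def Emat (m : ℕ) (a b : ℝ) : Matrix (Fin m) (Fin m) ℝ :=
  Matrix.of fun i j => band a b (if (i : ℕ) = 0 then 1 else (i : ℕ) + 2) ((j : ℕ) + 2)

lemma val_succAbove_one (m : ℕ) (j : Fin (m + 1)) :
    (((1 : Fin (m + 2)).succAbove j : Fin (m + 2)) : ℕ) =
      if (j : ℕ) = 0 then 0 else (j : ℕ) + 1 := by
  rcases eq_or_ne (j : ℕ) 0 with h | h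
  · rw [Fin.succAbove_of_castSucc_lt]
    · simp [h]
    · simp [Fin.lt_def, h]
  · rw [Fin.succAbove_of_le_castSucc]
    · simp [h]
    · simp [Fin.le_def]; omega

lemma L1 (a b : ℝ) (k : ℕ) :
    (Dmat (k + 3) a b).det =
      -a * (Dmat (k + 2) a b).det - b * (Cmat (k + 2) a b).det := by
  rw [show (k + 3) = (k + 2) + 1 from rfl, Matrix.det_succ_row_zero,
    Fin.sum_univ_succ, Fin.sum_univ_succ]
  simp only [Fin.succ_zero_eq_one]
  have hzero : ∀ j : Fin (k + 1), Dmat (k + 2 + 1) a b 0 j.succ.succ = 0 := by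
    intro j
    simp only [Dmat_apply, Fin.val_succ, Fin.val_zero, band]
    split_ifs <;> first | rfl | (exfalso; first | assumption | omega)
  have h00 : Dmat (k + 2 + 1) a b 0 0 = -a := by
    simp [Dmat_apply, band]
  have h01 : Dmat (k + 2 + 1) a b 0 1 = b := by
    simp [Dmat_apply, band]
  have hsub0 : (Dmat (k + 2 + 1) a b).submatrix Fin.succ (Fin.succAbove 0) =
      Dmat (k + 2) a b := by
    rw [Fin.succAbove_zero]
    ext i j
    simp only [Matrix.submatrix_apply, Dmat_apply, Fin.val_succ]
    exact band_shift a b i j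
  have hsub1 : (Dmat (k + 2 + 1) a b).submatrix Fin.succ (Fin.succAbove 1) =
      Cmat (k + 2) a b := by
    ext i j
    simp only [Matrix.submatrix_apply, Dmat_apply, Cmat, Matrix.of_apply, Fin.val_succ,
      val_succAbove_one]
  simp only [hzero, mul_zero, zero_mul, Finset.sum_const_zero, add_zero,
    h00, h01, hsub0, hsub1, Fin.val_zero, Fin.val_one, pow_zero, pow_one]
  ring

lemma L2 (a b : ℝ) (k : ℕ) :
    (Cmat (k + 2) a b).det =
      a * (Dmat (k + 1) a b).det + b * (Emat (k + 1) a b).det := by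
  rw [show (k + 2) = (k + 1) + 1 from rfl, Matrix.det_succ_column_zero,
    Fin.sum_univ_succ, Fin.sum_univ_succ]
  simp only [Fin.succ_zero_eq_one]
  have hzero : ∀ i : Fin k, Cmat (k + 1 + 1) a b i.succ.succ 0 = 0 := by
    intro i
    simp only [Cmat, Matrix.of_apply, Fin.val_succ, Fin.val_zero, if_pos rfl, band]
    split_ifs <;> first | rfl | (exfalso; first | assumption | omega)
  have h00 : Cmat (k + 1 + 1) a b 0 0 = a := by
    simp [Cmat, band]
  have h10 : Cmat (k + 1 + 1) a b 1 0 = -b := by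
    simp [Cmat, band]
  have hsub0 : (Cmat (k + 1 + 1) a b).submatrix (Fin.succAbove 0) Fin.succ =
      Dmat (k + 1) a b := by
    rw [Fin.succAbove_zero]
    ext i j
    simp only [Matrix.submatrix_apply, Cmat, Matrix.of_apply, Dmat_apply, Fin.val_succ,
      if_neg (Nat.succ_ne_zero (j : ℕ))]
    calc band a b ((i:ℕ)+1+1) ((j:ℕ)+1+1) = band a b ((i:ℕ)+1) ((j:ℕ)+1) := band_shift a b _ _
      _ = band a b i j := band_shift a b _ _
  have hsub1 : (Cmat (k + 1 + 1) a b).submatrix (Fin.succAbove 1) Fin.succ =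
      Emat (k + 1) a b := by
    ext i j
    simp only [Matrix.submatrix_apply, Cmat, Emat, Matrix.of_apply, Fin.val_succ,
      val_succAbove_one, if_neg (Nat.succ_ne_zero (j : ℕ))]
    split_ifs <;> rfl
  simp only [hzero, mul_zero, zero_mul, Finset.sum_const_zero, add_zero,
    h00, h10, hsub0, hsub1, Fin.val_zero, Fin.val_one, pow_zero, pow_one]
  ring

lemma L3 (a b : ℝ) (k : ℕ) :
    (Emat (k + 1) a b).det = b * (Dmat k a b).det := by
  rw [Matrix.det_succ_row_zero, Fin.sum_univ_succ]
  have hzero : ∀ j : Fin k, Emat (k + 1) a b 0 j.succ = 0 := by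
    intro j
    simp only [Emat, Matrix.of_apply, Fin.val_succ, Fin.val_zero, if_pos rfl, band]
    split_ifs <;> first | rfl | (exfalso; first | assumption | omega)
  have h00 : Emat (k + 1) a b 0 0 = b := by
    simp [Emat, band]
  have hsub0 : (Emat (k + 1) a b).submatrix Fin.succ (Fin.succAbove 0) = Dmat k a b := by
    rw [Fin.succAbove_zero]
    ext i j
    simp only [Matrix.submatrix_apply, Emat, Matrix.of_apply, Dmat_apply, Fin.val_succ,
      if_neg (Nat.succ_ne_zero (i : ℕ))]
    calc band a b ((i:ℕ)+1+2) ((j:ℕ)+1+2)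
        = band a b ((i:ℕ)+1+1) ((j:ℕ)+1+1) := band_shift a b _ _
      _ = band a b ((i:ℕ)+1) ((j:ℕ)+1) := band_shift a b _ _
      _ = band a b i j := band_shift a b _ _
  simp only [hzero, mul_zero, zero_mul, Finset.sum_const_zero, add_zero,
    h00, hsub0, Fin.val_zero, pow_zero]
  ring

theorem stmt0 (a b : ℝ) (ha : 0 < a) (hb : 0 < b) (n : ℕ) (hn : 2 ≤ n) :
    (Dmat n a b).det =
      -a * dZ a b ((n : ℤ) - 1) - a * b * dZ a b ((n : ℤ) - 2)
        - b ^ 3 * dZ a b ((n : ℤ) - 3) := by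
  rcases eq_or_lt_of_le hn with h2 | h3
  · -- n = 2
    subst h2
    have hd2 : (Dmat 2 a b).det = a * a - b * a := by
      rw [Matrix.det_fin_two]
      show -a * -a - b * a = a * a - b * a
      ring
    have hd1 : (Dmat 1 a b).det = -a := by
      rw [Matrix.det_fin_one]; rfl
    have hd0 : (Dmat 0 a b).det = 1 := Matrix.det_fin_zero
    have e1 : ((2 : ℕ) : ℤ) - 1 = ((1 : ℕ) : ℤ) := by norm_num
    have e2 : ((2 : ℕ) : ℤ) - 2 = ((0 : ℕ) : ℤ) := by norm_num
    have e3 : ((2 : ℕ) : ℤ) - 3 = (-1 : ℤ) := by norm_num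
    rw [e1, e2, e3]
    simp only [dZ, Int.toNat_natCast, if_pos (Int.natCast_nonneg _)]
    rw [if_neg (by norm_num), hd2, hd1, hd0]
    ring
  · -- n ≥ 3
    obtain ⟨k, rfl⟩ : ∃ k, n = k + 3 := ⟨n - 3, by omega⟩
    have e1 : ((k + 3 : ℕ) : ℤ) - 1 = ((k + 2 : ℕ) : ℤ) := by push_cast; ring
    have e2 : ((k + 3 : ℕ) : ℤ) - 2 = ((k + 1 : ℕ) : ℤ) := by push_cast; ring
    have e3 : ((k + 3 : ℕ) : ℤ) - 3 = ((k : ℕ) : ℤ) := by push_cast; ring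
    rw [e1, e2, e3]
    simp only [dZ, Int.toNat_natCast, if_pos (Int.natCast_nonneg _)]
    rw [L1, L2, L3]
    ring
end

section
/- For every positive real number a and every integer k ≥ 0, d_k equals (1/k!) times the k-th derivative at x = 0 of the function f(x) = 1/(1 + a·x + a·x² + x³), i.e. d_k = f^{(k)}(0)/k!. -/
/-- The solution sequence of the recurrence `d_k = -a d_{k-1} - a d_{k-2} - d_{k-3}`. -/
def dseq (a : ℝ) : ℕ → ℝ
  | 0 => 1
  | 1 => -a
  | 2 => a ^ 2 - a
  | (n+3) => -a * dseq a (n+2) - a * dseq a (n+1) - dseq a n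

lemma Dmat_congr {m n : ℕ} (a : ℝ) (i j : Fin m) (k l : Fin n)
    (h : (i:ℤ) - (j:ℤ) = (k:ℤ) - (l:ℤ)) : Dmat m a 1 i j = Dmat n a 1 k l := by
  simp only [Dmat, Matrix.of_apply]
  split_ifs <;> first | rfl | omega | tauto

lemma succAbove_val {m : ℕ} (p : Fin (m+1)) (i : Fin m) :
    ((p.succAbove i) : ℕ) = if (i:ℕ) < (p:ℕ) then (i:ℕ) else (i:ℕ)+1 := by
  rw [Fin.succAbove]
  rcases lt_or_ge ((i:ℕ)) ((p:ℕ)) with h | h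
  · rw [if_pos, if_pos h, Fin.coe_castSucc]
    rwa [Fin.lt_def, Fin.coe_castSucc]
  · rw [if_neg, if_neg (not_lt.2 h), Fin.val_succ]
    rw [Fin.lt_def, Fin.coe_castSucc]; omega

lemma det_eq_of_row0 {n : ℕ} (A : Matrix (Fin (n+1)) (Fin (n+1)) ℝ)
    (h0 : A 0 0 = 1) (h : ∀ j : Fin n, A 0 j.succ = 0) :
    A.det = (A.submatrix Fin.succ Fin.succ).det := by
  rw [Matrix.det_succ_row_zero, Fin.sum_univ_succ]
  simp [h0, h, Fin.succAbove_zero]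

lemma det_rec (a : ℝ) (n : ℕ) :
    (Dmat (n+3) a 1).det =
      -a * (Dmat (n+2) a 1).det - a * (Dmat (n+1) a 1).det - (Dmat n a 1).det := by
  set A := Dmat (n+3) a 1 with hA
  -- entries in column 0
  have hA00 : A 0 0 = -a := by norm_num [hA, Dmat]
  have hA10 : A (Fin.succ 0) 0 = a := by norm_num [hA, Dmat, Fin.val_succ]
  have hA20 : A (Fin.succ (Fin.succ 0)) 0 = -1 := by norm_num [hA, Dmat, Fin.val_succ, Nat.mod_eq_of_lt (show 2 < n + 3 by omega)]
  have hrest : ∀ i : Fin n, A i.succ.succ.succ 0 = 0 := by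
    intro i
    simp only [hA, Dmat, Matrix.of_apply, Fin.val_succ, Fin.val_zero]
    split_ifs <;> first | rfl | omega | tauto
  -- first minor
  have hm0 : (A.submatrix (Fin.succAbove 0) Fin.succ).det = (Dmat (n+2) a 1).det := by
    congr 1
    ext i j
    rw [Fin.succAbove_zero, Matrix.submatrix_apply]
    exact Dmat_congr a _ _ _ _ (by push_cast [Fin.val_succ]; ring)
  -- second minor
  have hm1 : (A.submatrix (Fin.succ (0 : Fin (n+2))).succAbove Fin.succ).det
      = (Dmat (n+1) a 1).det := by
    have h0 : (A.submatrix (Fin.succ (0 : Fin (n+2))).succAbove Fin.succ) 0 0 = 1 := by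
      simp only [Matrix.submatrix_apply, hA, Dmat, Matrix.of_apply, succAbove_val,
        Fin.val_succ, Fin.val_zero]
      norm_num
    have hr : ∀ j : Fin (n+1),
        (A.submatrix (Fin.succ (0 : Fin (n+2))).succAbove Fin.succ) 0 j.succ = 0 := by
      intro j
      simp only [Matrix.submatrix_apply, hA, Dmat, Matrix.of_apply, succAbove_val,
        Fin.val_succ, Fin.val_zero]
      split_ifs <;> first | rfl | omega | tauto
    rw [det_eq_of_row0 _ h0 hr]
    congr 1
    ext i j
    simp only [Matrix.submatrix_apply]
    apply Dmat_congr
    rw [succAbove_val]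
    push_cast [Fin.val_succ, Fin.val_zero, Nat.cast_ite]
    simp <;> omega
  -- third minor
  have hm2 : (A.submatrix (Fin.succ (Fin.succ (0 : Fin (n+1)))).succAbove Fin.succ).det
      = (Dmat n a 1).det := by
    set M := A.submatrix (Fin.succ (Fin.succ (0 : Fin (n+1)))).succAbove Fin.succ with hM
    have h0 : M 0 0 = 1 := by
      simp only [hM, Matrix.submatrix_apply, hA, Dmat, Matrix.of_apply, succAbove_val,
        Fin.val_succ, Fin.val_zero]
      norm_num
    have hr : ∀ j : Fin (n+1), M 0 j.succ = 0 := by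
      intro j
      simp only [hM, Matrix.submatrix_apply, hA, Dmat, Matrix.of_apply, succAbove_val,
        Fin.val_succ, Fin.val_zero]
      split_ifs <;> first | rfl | omega | tauto
    rw [det_eq_of_row0 _ h0 hr]
    set M' := M.submatrix Fin.succ Fin.succ with hM'
    have h0' : M' 0 0 = 1 := by
      simp only [hM', hM, Matrix.submatrix_apply, hA, Dmat, Matrix.of_apply, succAbove_val,
        Fin.val_succ, Fin.val_zero]
      norm_num
    have hr' : ∀ j : Fin n, M' 0 j.succ = 0 := by
      intro j
      simp only [hM', hM, Matrix.submatrix_apply, hA, Dmat, Matrix.of_apply, succAbove_val,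
        Fin.val_succ, Fin.val_zero]
      split_ifs <;> first | rfl | omega | tauto
    rw [det_eq_of_row0 _ h0' hr']
    congr 1
    ext i j
    simp only [hM', hM, Matrix.submatrix_apply]
    apply Dmat_congr
    rw [succAbove_val]
    push_cast [Fin.val_succ, Fin.val_zero, Nat.cast_ite]
    simp <;> omega
  rw [Matrix.det_succ_column_zero, Fin.sum_univ_succ, Fin.sum_univ_succ, Fin.sum_univ_succ]
  simp only [hrest, hA00, hA10, hA20, hm0, hm1, hm2, Fin.val_succ, Fin.val_zero,
    mul_zero, zero_mul, Finset.sum_const_zero, pow_zero, pow_succ]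
  ring

lemma det_eq_dseq (a : ℝ) : ∀ k, (Dmat k a 1).det = dseq a k := by
  intro k
  induction k using Nat.strong_induction_on with
  | _ k ih =>
    match k with
    | 0 => simp [dseq]
    | 1 => rw [Matrix.det_fin_one]; norm_num [Dmat, dseq]
    | 2 =>
      rw [Matrix.det_fin_two]
      norm_num [Dmat, dseq, Fin.val_zero, Fin.val_one]
      ring
    | (m+3) =>
      rw [det_rec, ih (m+2) (by omega), ih (m+1) (by omega), ih m (by omega)]
      simp [dseq]

lemma dseq_abs_le (a : ℝ) (ha : 0 < a) : ∀ n, |dseq a n| ≤ (2*a+2)^n := by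
  intro n
  induction n using Nat.strong_induction_on with
  | _ n ih =>
    match n with
    | 0 => simp [dseq]
    | 1 =>
      rw [pow_one]
      rw [show dseq a 1 = -a from rfl, abs_neg, abs_of_pos ha]; linarith
    | 2 =>
      rw [show dseq a 2 = a^2 - a from rfl]
      rw [abs_le]
      constructor <;> nlinarith
    | (m+3) =>
      have h2 := abs_le.mp (ih (m+2) (by omega))
      have h1 := abs_le.mp (ih (m+1) (by omega))
      have h0 := abs_le.mp (ih m (by omega))
      have hMpos : (0:ℝ) ≤ (2*a+2)^m := by positivity
      have key : a*(2*a+2)^(m+2) + a*(2*a+2)^(m+1) + (2*a+2)^m ≤ (2*a+2)^(m+3) := by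
        have e : a*(2*a+2)^(m+2) + a*(2*a+2)^(m+1) + (2*a+2)^m
            = (a*(2*a+2)^2 + a*(2*a+2) + 1) * (2*a+2)^m := by ring
        have e' : (2*a+2)^(m+3) = (2*a+2)^3 * (2*a+2)^m := by ring
        rw [e, e']
        apply mul_le_mul_of_nonneg_right _ hMpos
        nlinarith [mul_pos ha ha, mul_pos (mul_pos ha ha) ha]
      rw [show dseq a (m+3) = -a * dseq a (m+2) - a * dseq a (m+1) - dseq a m from rfl]
      rw [abs_le]
      constructor
      · nlinarith [mul_le_mul_of_nonneg_left h2.2 ha.le, mul_le_mul_of_nonneg_left h1.2 ha.le]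
      · nlinarith [mul_le_mul_of_nonneg_left h2.1 ha.le, mul_le_mul_of_nonneg_left h1.1 ha.le]

lemma hasSum_shift {g : ℕ → ℝ} {S : ℝ} (h : HasSum g S) :
    HasSum (fun n => if n = 0 then (0:ℝ) else g (n-1)) S := by
  have h' : HasSum (fun n => if n + 1 = 0 then (0:ℝ) else g (n + 1 - 1)) S := by
    simpa using h
  have := (hasSum_nat_add_iff (f := fun n => if n = 0 then (0:ℝ) else g (n-1)) 1).mp h'
  simpa using this

lemma hasSum_inv_cubic (a : ℝ) (ha : 0 < a) (x : ℝ) (hx : |x| < 1/(2*(2*a+2))) :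
    HasSum (fun n => dseq a n * x ^ n) ((1 + a * x + a * x ^ 2 + x ^ 3)⁻¹) := by
  have hMx : (2*a+2) * |x| < 1/2 := by
    have h2 : (0:ℝ) < 2*(2*a+2) := by linarith
    rw [lt_div_iff₀ (by norm_num : (0:ℝ) < 2)]
    calc (2*a+2) * |x| * 2 = (2*(2*a+2)) * |x| := by ring
      _ < (2*(2*a+2)) * (1/(2*(2*a+2))) := by
          apply mul_lt_mul_of_pos_left hx h2
      _ = 1 := by field_simp
  have hsum : Summable (fun n => dseq a n * x ^ n) := by
    apply Summable.of_norm_bounded (g := fun n => ((2*a+2)*|x|)^n)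
      (summable_geometric_of_lt_one (by positivity) (by linarith))
    intro n
    rw [Real.norm_eq_abs, abs_mul, abs_pow, mul_pow]
    exact mul_le_mul_of_nonneg_right (dseq_abs_le a ha n) (by positivity)
  set S := ∑' n, dseq a n * x ^ n with hS
  have h0 : HasSum (fun n => dseq a n * x ^ n) S := hsum.hasSum
  have h1 := hasSum_shift (h0.mul_left (a*x))
  have h2 := hasSum_shift (hasSum_shift (h0.mul_left (a*x^2)))
  have h3 := hasSum_shift (hasSum_shift (hasSum_shift (h0.mul_left (x^3))))
  have hadd := ((h0.add h1).add h2).add h3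
  have huniq : S + a*x*S + a*x^2*S + x^3*S = 1 := by
    refine HasSum.unique ?_ (hasSum_ite_eq 0 1)
    convert hadd using 1
    funext n
    match n with
    | 0 => norm_num [dseq]
    | 1 => norm_num [dseq]; try ring
    | 2 => norm_num [dseq]; try ring
    | (m+3) =>
      norm_num
      rw [show dseq a (m+3) = -a * dseq a (m+2) - a * dseq a (m+1) - dseq a m from rfl]
      ring
  have hmul : S * (1 + a * x + a * x ^ 2 + x ^ 3) = 1 := by
    linear_combination huniq
  rw [← eq_inv_of_mul_eq_one_left hmul]
  exact h0

lemma hasFPS (a : ℝ) (ha : 0 < a) :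
    HasFPowerSeriesOnBall (fun x : ℝ => (1 + a * x + a * x ^ 2 + x ^ 3)⁻¹)
      (FormalMultilinearSeries.ofScalars ℝ (dseq a)) 0
      (ENNReal.ofReal (1/(2*(2*a+2)))) := by
  have hrpos : (0:ℝ) < 1/(2*(2*a+2)) := by positivity
  constructor
  · rw [show ENNReal.ofReal (1/(2*(2*a+2)))
        = ((Real.toNNReal (1/(2*(2*a+2))) : NNReal) : ENNReal) from rfl]
    apply FormalMultilinearSeries.le_radius_of_bound _ 1
    intro n
    rw [FormalMultilinearSeries.ofScalars_norm, Real.coe_toNNReal _ hrpos.le]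
    calc ‖dseq a n‖ * (1/(2*(2*a+2)))^n ≤ (2*a+2)^n * (1/(2*(2*a+2)))^n := by
          apply mul_le_mul_of_nonneg_right (dseq_abs_le a ha n) (by positivity)
      _ = ((2*a+2) * (1/(2*(2*a+2))))^n := by rw [mul_pow]
      _ = (1/2)^n := by congr 1; field_simp
      _ ≤ 1 := pow_le_one₀ (by norm_num) (by norm_num)
  · exact ENNReal.ofReal_pos.mpr hrpos
  · intro y hy
    have hy' : |y| < 1/(2*(2*a+2)) := by
      rw [EMetric.mem_ball, edist_dist, Real.dist_eq, sub_zero] at hy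
      rwa [ENNReal.ofReal_lt_ofReal_iff hrpos] at hy
    have hs := hasSum_inv_cubic a ha y hy'
    simp only [zero_add]
    have heq : (fun n => (FormalMultilinearSeries.ofScalars ℝ (dseq a) n) fun _ => y)
        = fun n => dseq a n * y ^ n := by
      funext n
      rw [FormalMultilinearSeries.ofScalars_apply_eq, smul_eq_mul]
    rw [heq]
    exact hs

lemma dseq_eq_deriv (a : ℝ) (ha : 0 < a) (k : ℕ) :
    dseq a k = (1 / (k.factorial : ℝ)) *
        iteratedDeriv k (fun x : ℝ => (1 + a * x + a * x ^ 2 + x ^ 3)⁻¹) 0 := by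
  have h := (hasFPS a ha).factorial_smul (1:ℝ) k
  rw [FormalMultilinearSeries.ofScalars_apply_eq, ← iteratedDeriv_eq_iteratedFDeriv] at h
  simp only [one_pow, smul_eq_mul, mul_one, nsmul_eq_mul] at h
  rw [← h]
  have : (k.factorial : ℝ) ≠ 0 := Nat.cast_ne_zero.mpr k.factorial_ne_zero
  field_simp

theorem stmt3 (a : ℝ) (ha : 0 < a) (k : ℕ) :
    (Dmat k a 1).det =
      (1 / (k.factorial : ℝ)) *
        iteratedDeriv k (fun x : ℝ => (1 + a * x + a * x ^ 2 + x ^ 3)⁻¹) 0 := by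
  rw [det_eq_dseq a k, dseq_eq_deriv a ha k]
end

section
/- For every integer n ≥ 0, the determinant of the n×n matrix D_n(3,1) equals (-1)ⁿ·(n+1)(n+2)/2. -/
/-- `Dmat n 3 1` with the first column replaced by `(3, -1, 0, …)`. -/
def Gmat (n : ℕ) : Matrix (Fin n) (Fin n) ℝ :=
  Matrix.of fun i j =>
    if (j : ℕ) = 0 then (if (i : ℕ) = 0 then 3 else if (i : ℕ) = 1 then -1 else 0)
    else Dmat n 3 1 i j

/-- `Dmat n 3 1` with the first column replaced by `(-1, 0, …)`. -/
def Hmat (n : ℕ) : Matrix (Fin n) (Fin n) ℝ :=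
  Matrix.of fun i j =>
    if (j : ℕ) = 0 then (if (i : ℕ) = 0 then -1 else 0)
    else Dmat n 3 1 i j

lemma succAbove_one_val (n : ℕ) (j : Fin (n+1)) :
    (((1 : Fin (n+2)).succAbove j) : ℕ) = if (j : ℕ) = 0 then 0 else (j : ℕ) + 1 := by
  rcases j with ⟨jv, hj⟩
  rcases jv with _ | jv
  · simp [Fin.succAbove, Fin.lt_def]
  · simp [Fin.succAbove, Fin.lt_def]

lemma Dmat_sub0 (n : ℕ) :
    (Dmat (n+2) 3 1).submatrix Fin.succ ((0 : Fin (n+2)).succAbove) = Dmat (n+1) 3 1 := by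
  ext i j
  simp only [Matrix.submatrix_apply, Fin.zero_succAbove, Dmat, Matrix.of_apply, Fin.val_succ]
  split_ifs <;> first | rfl | omega | exact ‹False›.elim

lemma Dmat_sub1 (n : ℕ) :
    (Dmat (n+2) 3 1).submatrix Fin.succ ((1 : Fin (n+2)).succAbove) = Gmat (n+1) := by
  ext i j
  simp only [Matrix.submatrix_apply, Dmat, Gmat, Matrix.of_apply, Fin.val_succ,
    succAbove_one_val]
  split_ifs <;> first | rfl | omega | exact ‹False›.elim

lemma Gmat_sub0 (n : ℕ) :
    (Gmat (n+2)).submatrix Fin.succ ((0 : Fin (n+2)).succAbove) = Dmat (n+1) 3 1 := by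
  ext i j
  simp only [Matrix.submatrix_apply, Fin.zero_succAbove, Dmat, Gmat, Matrix.of_apply,
    Fin.val_succ]
  split_ifs <;> first | rfl | omega | exact ‹False›.elim

lemma Gmat_sub1 (n : ℕ) :
    (Gmat (n+2)).submatrix Fin.succ ((1 : Fin (n+2)).succAbove) = Hmat (n+1) := by
  ext i j
  simp only [Matrix.submatrix_apply, Dmat, Gmat, Hmat, Matrix.of_apply, Fin.val_succ,
    succAbove_one_val]
  split_ifs <;> first | rfl | omega | exact ‹False›.elim

lemma Hmat_sub0 (n : ℕ) :
    (Hmat (n+2)).submatrix Fin.succ ((0 : Fin (n+2)).succAbove) = Dmat (n+1) 3 1 := by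
  ext i j
  simp only [Matrix.submatrix_apply, Fin.zero_succAbove, Dmat, Hmat, Matrix.of_apply,
    Fin.val_succ]
  split_ifs <;> first | rfl | omega | exact ‹False›.elim

lemma Hmat_sub1_det (n : ℕ) :
    ((Hmat (n+2)).submatrix Fin.succ ((1 : Fin (n+2)).succAbove)).det = 0 := by
  apply Matrix.det_eq_zero_of_column_eq_zero 0
  intro i
  simp only [Matrix.submatrix_apply, Hmat, Matrix.of_apply, Fin.val_succ, succAbove_one_val]
  norm_num

lemma detD_rec (n : ℕ) :
    (Dmat (n+2) 3 1).det = -3 * (Dmat (n+1) 3 1).det - (Gmat (n+1)).det := by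
  rw [Matrix.det_succ_row_zero, Fin.sum_univ_succ, Fin.sum_univ_succ]
  have htail : ∀ j : Fin n,
      (-1 : ℝ) ^ ((j.succ.succ : Fin (n+2)) : ℕ) * Dmat (n+2) 3 1 0 j.succ.succ *
        ((Dmat (n+2) 3 1).submatrix Fin.succ (j.succ.succ).succAbove).det = 0 := by
    intro j
    have : Dmat (n+2) 3 1 0 j.succ.succ = 0 := by
      simp only [Dmat, Matrix.of_apply, Fin.val_succ, Fin.val_zero]
      split_ifs <;> first | rfl | omega | exact ‹False›.elim
    rw [this]; ring
  rw [Finset.sum_eq_zero fun j _ => htail j]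
  have h0 : Dmat (n+2) 3 1 0 0 = -3 := by
    simp [Dmat]
  have h1 : Dmat (n+2) 3 1 0 ((0 : Fin (n+1)).succ) = 1 := by
    simp only [Dmat, Matrix.of_apply, Fin.val_succ, Fin.val_zero]
    norm_num
  rw [h0, h1, Fin.succ_zero_eq_one, Dmat_sub0, Dmat_sub1]
  simp
  ring

lemma detG_rec (n : ℕ) :
    (Gmat (n+2)).det = 3 * (Dmat (n+1) 3 1).det - (Hmat (n+1)).det := by
  rw [Matrix.det_succ_row_zero, Fin.sum_univ_succ, Fin.sum_univ_succ]
  have htail : ∀ j : Fin n,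
      (-1 : ℝ) ^ ((j.succ.succ : Fin (n+2)) : ℕ) * Gmat (n+2) 0 j.succ.succ *
        ((Gmat (n+2)).submatrix Fin.succ (j.succ.succ).succAbove).det = 0 := by
    intro j
    have : Gmat (n+2) 0 j.succ.succ = 0 := by
      simp only [Gmat, Dmat, Matrix.of_apply, Fin.val_succ, Fin.val_zero]
      split_ifs <;> first | rfl | omega | exact ‹False›.elim
    rw [this]; ring
  rw [Finset.sum_eq_zero fun j _ => htail j]
  have h0 : Gmat (n+2) 0 0 = 3 := by
    simp [Gmat]
  have h1 : Gmat (n+2) 0 ((0 : Fin (n+1)).succ) = 1 := by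
    simp only [Gmat, Dmat, Matrix.of_apply, Fin.val_succ, Fin.val_zero]
    norm_num
  rw [h0, h1, Fin.succ_zero_eq_one, Gmat_sub0, Gmat_sub1]
  simp
  ring

lemma detH_rec (n : ℕ) :
    (Hmat (n+2)).det = -(Dmat (n+1) 3 1).det := by
  rw [Matrix.det_succ_row_zero, Fin.sum_univ_succ, Fin.sum_univ_succ]
  have htail : ∀ j : Fin n,
      (-1 : ℝ) ^ ((j.succ.succ : Fin (n+2)) : ℕ) * Hmat (n+2) 0 j.succ.succ *
        ((Hmat (n+2)).submatrix Fin.succ (j.succ.succ).succAbove).det = 0 := by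
    intro j
    have : Hmat (n+2) 0 j.succ.succ = 0 := by
      simp only [Hmat, Dmat, Matrix.of_apply, Fin.val_succ, Fin.val_zero]
      split_ifs <;> first | rfl | omega | exact ‹False›.elim
    rw [this]; ring
  rw [Finset.sum_eq_zero fun j _ => htail j]
  have h0 : Hmat (n+2) 0 0 = -1 := by
    simp [Hmat]
  have h1 : Hmat (n+2) 0 ((0 : Fin (n+1)).succ) = 1 := by
    simp only [Hmat, Dmat, Matrix.of_apply, Fin.val_succ, Fin.val_zero]
    norm_num
  rw [h0, h1, Fin.succ_zero_eq_one, Hmat_sub0, Hmat_sub1_det]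
  simp

lemma triple (n : ℕ) :
    (Dmat (n+1) 3 1).det = (-1 : ℝ) ^ (n+1) * ((n : ℝ) + 2) * ((n : ℝ) + 3) / 2 ∧
    (Gmat (n+1)).det = (-1 : ℝ) ^ n * ((n : ℝ) + 1) * ((n : ℝ) + 3) ∧
    (Hmat (n+1)).det = (-1 : ℝ) ^ (n+1) * ((n : ℝ) + 1) * ((n : ℝ) + 2) / 2 := by
  induction n with
  | zero =>
      refine ⟨?_, ?_, ?_⟩ <;>
        · rw [Matrix.det_fin_one]
          norm_num [Dmat, Gmat, Hmat]
  | succ m ih =>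
      obtain ⟨hd, hg, hh⟩ := ih
      refine ⟨?_, ?_, ?_⟩
      · rw [detD_rec, hd, hg]
        push_cast
        ring
      · rw [detG_rec, hd, hh]
        push_cast
        ring
      · rw [detH_rec, hd]
        push_cast
        ring

theorem stmt5 (n : ℕ) :
    (Dmat n 3 1).det = (-1 : ℝ) ^ n * ((n : ℝ) + 1) * ((n : ℝ) + 2) / 2 := by
  cases n with
  | zero =>
      simp [Matrix.det_fin_zero]
  | succ m =>
      have := (triple m).1
      rw [this]
      push_cast
      ring
end

section
/- Let k ≥ 2 be an integer, let α > 5 be a real number, and let a(i), b(i), c(i), d(i) ∈ ℂ for i = 1,…,k−1 satisfy |a(i)| = |d(i)| = 1 and |b(i)| = |c(i)| = α. Suppose x_1,…,x_k ∈ ℂ with x_1 ≠ 0 satisfy: c(1)x_1 + d(1)x_2 = 0; b(2)x_1 + c(2)x_2 + d(2)x_3 = 0 (if k ≥ 3); and a(i)x_{i−2} + b(i)x_{i−1} + c(i)x_i + d(i)x_{i+1} = 0 for every 3 ≤ i ≤ k−1. Then |x_{l+1}| ≥ (α − 2)·|x_l| for every l = 1,…,k−1. -/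
theorem stmt7 (k : ℕ) (hk : 2 ≤ k) (α : ℝ) (hα : 5 < α)
    (a b c d x : ℕ → ℂ)
    (habs : ∀ i, 1 ≤ i → i ≤ k - 1 →
      ‖a i‖ = 1 ∧ ‖d i‖ = 1 ∧
        ‖b i‖ = α ∧ ‖c i‖ = α)
    (hx1 : x 1 ≠ 0)
    (heq1 : c 1 * x 1 + d 1 * x 2 = 0)
    (heq2 : 3 ≤ k → b 2 * x 1 + c 2 * x 2 + d 2 * x 3 = 0)
    (heqi : ∀ i, 3 ≤ i → i ≤ k - 1 →
      a i * x (i - 2) + b i * x (i - 1) + c i * x i + d i * x (i + 1) = 0) :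
    ∀ l, 1 ≤ l → l ≤ k - 1 →
      (α - 2) * ‖x l‖ ≤ ‖x (l + 1)‖ := by
  have hk1 : 1 ≤ k - 1 := by omega
  have h2abs : ‖x 2‖ = α * ‖x 1‖ := by
    obtain ⟨ha, hd, hb, hc⟩ := habs 1 le_rfl hk1
    have h : d 1 * x 2 = -(c 1 * x 1) := by linear_combination heq1
    have := congrArg (‖·‖) h
    simpa [norm_mul, hd, hc] using this
  intro l
  induction l using Nat.strong_induction_on with
  | _ l ih =>
    intro hl1 hlk
    rcases Nat.lt_or_ge l 3 with h3 | h3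
    · interval_cases l
      · -- l = 1
        have h1 : 0 ≤ ‖x 1‖ := norm_nonneg _
        rw [h2abs]; nlinarith
      · -- l = 2
        have hk3 : 3 ≤ k := by omega
        obtain ⟨ha2, hd2, hb2, hc2⟩ := habs 2 one_le_two hlk
        have h : c 2 * x 2 = -(b 2 * x 1 + d 2 * x 3) := by
          linear_combination heq2 hk3
        have habs2 : α * ‖x 2‖ = ‖b 2 * x 1 + d 2 * x 3‖ := by
          rw [← hc2, ← norm_mul, h, norm_neg]
        have htri : ‖b 2 * x 1 + d 2 * x 3‖
            ≤ ‖b 2 * x 1‖ + ‖d 2 * x 3‖ :=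
          norm_add_le _ _
        rw [norm_mul, norm_mul, hb2, hd2, one_mul] at htri
        have h1 : 0 ≤ ‖x 1‖ := norm_nonneg _
        have h2 : 0 ≤ ‖x 2‖ := norm_nonneg _
        have h3' : 0 ≤ ‖x 3‖ := norm_nonneg _
        show (α - 2) * ‖x 2‖ ≤ ‖x 3‖
        nlinarith [h2abs]
    · obtain ⟨m, rfl⟩ : ∃ m, l = m + 3 := ⟨l - 3, by omega⟩
      obtain ⟨ha, hd, hb, hc⟩ := habs (m + 3) (by omega) hlk
      have heq := heqi (m + 3) (by omega) hlk
      have hidx1 : (m + 3) - 2 = m + 1 := rfl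
      have hidx2 : (m + 3) - 1 = m + 2 := rfl
      rw [hidx1, hidx2] at heq
      have ih1 := ih (m + 2) (by omega) (by omega) (by omega)
      have ih2 := ih (m + 1) (by omega) (by omega) (by omega)
      have h : c (m + 3) * x (m + 3)
          = -(a (m + 3) * x (m + 1) + b (m + 3) * x (m + 2) + d (m + 3) * x (m + 4)) := by
        linear_combination heq
      have habs3 : α * ‖x (m + 3)‖ = ‖
          a (m + 3) * x (m + 1) + b (m + 3) * x (m + 2) + d (m + 3) * x (m + 4)‖ := by
        rw [← hc, ← norm_mul, h, norm_neg]
      have htri : ‖a (m + 3) * x (m + 1) + b (m + 3) * x (m + 2) + d (m + 3) * x (m + 4)‖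
          ≤ ‖a (m + 3) * x (m + 1)‖ + ‖b (m + 3) * x (m + 2)‖
            + ‖d (m + 3) * x (m + 4)‖ := by
        calc _ ≤ ‖a (m + 3) * x (m + 1) + b (m + 3) * x (m + 2)‖
                  + ‖d (m + 3) * x (m + 4)‖ := norm_add_le _ _
          _ ≤ _ := by gcongr; exact norm_add_le _ _
      rw [norm_mul, norm_mul, norm_mul, ha, hb, hd, one_mul, one_mul] at htri
      set X1 := ‖x (m + 1)‖
      set X2 := ‖x (m + 2)‖
      set X3 := ‖x (m + 3)‖
      set X4 := ‖x (m + 4)‖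
      have h1 : 0 ≤ X1 := norm_nonneg _
      have h2 : 0 ≤ X2 := norm_nonneg _
      have h3 : 0 ≤ X3 := norm_nonneg _
      have key : α * X3 ≤ X1 + α * X2 + X4 := by
        rw [habs3]; linarith [htri]
      -- (α-2)^2 * X1 ≤ X3
      have hp : (0:ℝ) < α - 2 := by linarith
      have hsq : (α - 2) ^ 2 * X1 ≤ X3 := by nlinarith
      nlinarith [mul_le_mul_of_nonneg_left ih2 (le_of_lt hp), hsq,
        mul_nonneg (mul_nonneg h3 (sub_nonneg.2 hα.le)) (sub_nonneg.2 hα.le)]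
end

section
/- For every real number a with |a| > 5, every integer n ≥ 1, and every k with 1 ≤ k ≤ n+1, the n×n matrix Ẽ_n^k(a,1), obtained by deleting the k-th row of Ẽ_n(a,1), is invertible; that is, all order-n minors of Ẽ_n(a,1) are nonzero. -/
/-- The `(n+1) × n` matrix `Ẽ_n(a,1)`. -/
def Etmat (n : ℕ) (a : ℝ) : Matrix (Fin (n + 1)) (Fin n) ℝ :=
  Matrix.of fun i j =>
    if (i : ℕ) = (j : ℕ) then a
    else if (i : ℕ) + 1 = (j : ℕ) then 1
    else if (i : ℕ) = (j : ℕ) + 1 then a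
    else if (i : ℕ) = (j : ℕ) + 2 then 1
    else 0

/-- `Ẽ_n^k(a,1)`: the `n × n` matrix obtained from `Ẽ_n(a,1)` by deleting the
`k`-th row (rows of `Ẽ_n(a,1)` being counted `1,…,n+1`). -/
def Etk (n : ℕ) (a : ℝ) (k : ℕ) : Matrix (Fin n) (Fin n) ℝ :=
  Matrix.of fun i j =>
    Etmat n a (if (i : ℕ) + 1 < k then i.castSucc else i.succ) j

/-- Column weights: increasing geometrically up to index `k-1`, then decreasing. -/
noncomputable def wt (k : ℕ) (j : ℕ) : ℝ := (2 : ℝ) ^ (min (j : ℤ) (2 * (k : ℤ) - 2 - j))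

lemma wt_pos (k j : ℕ) : 0 < wt k j := zpow_pos (by norm_num) _

lemma wt_succ_of_lt (k j : ℕ) (h : j + 1 < k) : wt k (j + 1) = 2 * wt k j := by
  have h1 : min (((j + 1 : ℕ) : ℤ)) (2 * (k : ℤ) - 2 - ((j + 1 : ℕ) : ℤ))
      = min (j : ℤ) (2 * (k : ℤ) - 2 - (j : ℤ)) + 1 := by push_cast; omega
  unfold wt
  rw [h1, zpow_add_one₀ (two_ne_zero)]
  ring

lemma wt_succ_of_ge (k j : ℕ) (h : k ≤ j + 1) : wt k (j + 1) = wt k j / 2 := by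
  have h1 : min (((j + 1 : ℕ) : ℤ)) (2 * (k : ℤ) - 2 - ((j + 1 : ℕ) : ℤ))
      = min (j : ℤ) (2 * (k : ℤ) - 2 - (j : ℤ)) - 1 := by push_cast; omega
  unfold wt
  rw [h1, zpow_sub_one₀ (two_ne_zero)]
  ring

lemma wt_le_two_mul_succ (k j : ℕ) : wt k j ≤ 2 * wt k (j + 1) := by
  have h1 : min (j : ℤ) (2 * (k : ℤ) - 2 - (j : ℤ))
      ≤ min (((j + 1 : ℕ) : ℤ)) (2 * (k : ℤ) - 2 - ((j + 1 : ℕ) : ℤ)) + 1 := by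
    push_cast; omega
  have := zpow_le_zpow_right₀ (one_le_two (α := ℝ)) h1
  rw [zpow_add_one₀ (two_ne_zero)] at this
  unfold wt
  linarith

/-- Sum of a one-point indicator function is bounded. -/
lemma sum_if_le {n : ℕ} (s : Finset (Fin n)) (P : Fin n → Prop) [DecidablePred P]
    (hP : ∀ j₁ j₂ : Fin n, P j₁ → P j₂ → j₁ = j₂) (c : Fin n → ℝ) (b : ℝ) (hb : 0 ≤ b)
    (h : ∀ j ∈ s, P j → c j ≤ b) :
    ∑ j ∈ s, (if P j then c j else 0) ≤ b := by
  by_cases he : ∃ j ∈ s, P j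
  · obtain ⟨j₀, hj₀s, hj₀⟩ := he
    rw [Finset.sum_eq_single_of_mem j₀ hj₀s (fun j hj hne => by
      rw [if_neg]; exact fun hPj => hne (hP j j₀ hPj hj₀))]
    rw [if_pos hj₀]
    exact h j₀ hj₀s hj₀
  · push_neg at he
    rw [Finset.sum_eq_zero (fun j hj => if_neg (he j hj))]
    exact hb

/-- Row-dominance criterion for a row whose entries follow the band pattern. -/
lemma row_sum_lt {n : ℕ} {a : ℝ} (B : Matrix (Fin n) (Fin n) ℝ) (i : Fin n) (r : ℕ)
    (d : Fin n → ℝ) (hd : ∀ j, 0 < d j)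
    (hB : ∀ j : Fin n, B i j =
      (if r = (j : ℕ) then a else if r + 1 = (j : ℕ) then 1
       else if r = (j : ℕ) + 1 then a else if r = (j : ℕ) + 2 then 1 else 0) * d j)
    (hdiag : B i i = a * d i)
    (b1 b2 b3 b4 : ℝ) (hb1 : 0 ≤ b1) (hb2 : 0 ≤ b2) (hb3 : 0 ≤ b3) (hb4 : 0 ≤ b4)
    (h1 : ∀ j : Fin n, j ≠ i → r = (j : ℕ) → |a| * d j ≤ b1)
    (h2 : ∀ j : Fin n, j ≠ i → r + 1 = (j : ℕ) → d j ≤ b2)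
    (h3 : ∀ j : Fin n, j ≠ i → r = (j : ℕ) + 1 → |a| * d j ≤ b3)
    (h4 : ∀ j : Fin n, j ≠ i → r = (j : ℕ) + 2 → d j ≤ b4)
    (hlt : b1 + b2 + b3 + b4 < |a| * d i) :
    ∑ j ∈ Finset.univ.erase i, ‖B i j‖ < ‖B i i‖ := by
  have hnorm : ‖B i i‖ = |a| * d i := by
    rw [hdiag, Real.norm_eq_abs, abs_mul, abs_of_pos (hd i)]
  rw [hnorm]
  have step1 : ∑ j ∈ Finset.univ.erase i, ‖B i j‖
      ≤ ∑ j ∈ Finset.univ.erase i,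
        ((if r = (j : ℕ) then |a| * d j else 0) + (if r + 1 = (j : ℕ) then d j else 0)
         + (if r = (j : ℕ) + 1 then |a| * d j else 0)
         + (if r = (j : ℕ) + 2 then d j else 0)) := by
    apply Finset.sum_le_sum
    intro j hj
    rw [hB j, Real.norm_eq_abs, abs_mul, abs_of_pos (hd j)]
    have hdj := hd j
    have hna := abs_nonneg a
    have hprod : 0 ≤ |a| * d j := mul_nonneg hna hdj.le
    split_ifs <;> (try simp only [abs_one, abs_zero, one_mul, zero_mul]) <;> linarith
  have step2 : ∑ j ∈ Finset.univ.erase i,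
        ((if r = (j : ℕ) then |a| * d j else 0) + (if r + 1 = (j : ℕ) then d j else 0)
         + (if r = (j : ℕ) + 1 then |a| * d j else 0)
         + (if r = (j : ℕ) + 2 then d j else 0)) ≤ b1 + b2 + b3 + b4 := by
    rw [Finset.sum_add_distrib, Finset.sum_add_distrib, Finset.sum_add_distrib]
    refine add_le_add (add_le_add (add_le_add ?_ ?_) ?_) ?_
    · exact sum_if_le _ _ (fun j₁ j₂ e₁ e₂ => Fin.val_injective (by omega)) _ _ hb1
        (fun j hj hPj => h1 j (Finset.ne_of_mem_erase hj) hPj)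
    · exact sum_if_le _ _ (fun j₁ j₂ e₁ e₂ => Fin.val_injective (by omega)) _ _ hb2
        (fun j hj hPj => h2 j (Finset.ne_of_mem_erase hj) hPj)
    · exact sum_if_le _ _ (fun j₁ j₂ e₁ e₂ => Fin.val_injective (by omega)) _ _ hb3
        (fun j hj hPj => h3 j (Finset.ne_of_mem_erase hj) hPj)
    · exact sum_if_le _ _ (fun j₁ j₂ e₁ e₂ => Fin.val_injective (by omega)) _ _ hb4
        (fun j hj hPj => h4 j (Finset.ne_of_mem_erase hj) hPj)
  linarith

theorem stmt9 (a : ℝ) (ha : 5 < |a|) (n : ℕ) (hn : 1 ≤ n)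
    (k : ℕ) (hk1 : 1 ≤ k) (hk2 : k ≤ n + 1) :
    IsUnit (Etk n a k) ∧ (Etk n a k).det ≠ 0 := by
  have hdet : (Etk n a k).det ≠ 0 := by
    have hB : ((Etk n a k) * Matrix.diagonal (fun j : Fin n => wt k (j : ℕ))).det ≠ 0 := by
      apply det_ne_zero_of_sum_row_lt_diag
      intro i
      have hmul : ∀ j : Fin n,
          ((Etk n a k) * Matrix.diagonal (fun j : Fin n => wt k (j : ℕ))) i j
            = Etk n a k i j * wt k (j : ℕ) := fun j => Matrix.mul_diagonal _ _ _ _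
      by_cases hc : (i : ℕ) + 1 < k
      · -- "top" rows: the row of `Ẽ` used is row `i` itself
        refine row_sum_lt (a := a) _ i (i : ℕ) (fun j : Fin n => wt k (j : ℕ))
          (fun j => wt_pos k _) ?_ ?_ 0 (2 * wt k (i : ℕ)) (|a| * (wt k (i : ℕ) / 2))
          (wt k (i : ℕ) / 4) le_rfl (by nlinarith [wt_pos k (i:ℕ)])
          (by nlinarith [wt_pos k (i:ℕ), abs_nonneg a]) (by nlinarith [wt_pos k (i:ℕ)])
          ?_ ?_ ?_ ?_ ?_
        · intro j
          rw [hmul j]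
          congr 1
          simp only [Etk, Etmat, Matrix.of_apply, if_pos hc, Fin.coe_castSucc]
        · rw [hmul i]
          congr 1
          simp only [Etk, Etmat, Matrix.of_apply, if_pos hc, Fin.coe_castSucc]
          rw [if_true]
        · intro j hj hPj
          exact absurd (Fin.val_injective hPj.symm) hj
        · intro j hj hPj
          show wt k (j : ℕ) ≤ 2 * wt k (i : ℕ)
          rw [← hPj, wt_succ_of_lt k (i : ℕ) hc]
        · intro j hj hPj
          have h1 : wt k ((j : ℕ) + 1) = 2 * wt k (j : ℕ) :=
            wt_succ_of_lt k (j : ℕ) (by omega)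
          show |a| * wt k (j : ℕ) ≤ |a| * (wt k (i : ℕ) / 2)
          rw [show wt k (j : ℕ) = wt k (i : ℕ) / 2 by rw [hPj, h1]; ring]
        · intro j hj hPj
          have h1 : wt k ((j : ℕ) + 1) = 2 * wt k (j : ℕ) :=
            wt_succ_of_lt k (j : ℕ) (by omega)
          have h2 : wt k ((j : ℕ) + 2) = 2 * wt k ((j : ℕ) + 1) :=
            wt_succ_of_lt k ((j : ℕ) + 1) (by omega)
          show wt k (j : ℕ) ≤ wt k (i : ℕ) / 4
          rw [show wt k (j : ℕ) = wt k (i : ℕ) / 4 by rw [hPj, h2, h1]; ring]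
        · have hD := wt_pos k (i : ℕ)
          nlinarith [mul_pos (show (0:ℝ) < |a| - 9/2 by linarith) hD]
      · -- "bottom" rows: the row of `Ẽ` used is row `i+1`
        have hk : k ≤ (i : ℕ) + 1 := by omega
        refine row_sum_lt (a := a) _ i ((i : ℕ) + 1) (fun j : Fin n => wt k (j : ℕ))
          (fun j => wt_pos k _) ?_ ?_ (|a| * (wt k (i : ℕ) / 2)) (wt k (i : ℕ) / 4) 0
          (2 * wt k (i : ℕ)) (by nlinarith [wt_pos k (i:ℕ), abs_nonneg a])
          (by nlinarith [wt_pos k (i:ℕ)]) le_rfl (by nlinarith [wt_pos k (i:ℕ)])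
          ?_ ?_ ?_ ?_ ?_
        · intro j
          rw [hmul j]
          congr 1
          simp only [Etk, Etmat, Matrix.of_apply, if_neg hc, Fin.val_succ]
        · rw [hmul i]
          congr 1
          simp only [Etk, Etmat, Matrix.of_apply, if_neg hc, Fin.val_succ]
          rw [if_neg (by omega), if_neg (by omega), if_true]
        · intro j hj hPj
          show |a| * wt k (j : ℕ) ≤ |a| * (wt k (i : ℕ) / 2)
          rw [show wt k (j : ℕ) = wt k (i : ℕ) / 2 by
            rw [← hPj]; exact wt_succ_of_ge k (i : ℕ) hk]
        · intro j hj hPj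
          have h1 : wt k ((i : ℕ) + 1) = wt k (i : ℕ) / 2 := wt_succ_of_ge k (i : ℕ) hk
          have h2 : wt k ((i : ℕ) + 2) = wt k ((i : ℕ) + 1) / 2 :=
            wt_succ_of_ge k ((i : ℕ) + 1) (by omega)
          show wt k (j : ℕ) ≤ wt k (i : ℕ) / 4
          rw [show wt k (j : ℕ) = wt k (i : ℕ) / 4 by rw [← hPj, h2, h1]; ring]
        · intro j hj hPj
          exact absurd (Fin.val_injective (by omega)) hj
        · intro j hj hPj
          show wt k (j : ℕ) ≤ 2 * wt k (i : ℕ)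
          have hji : (j : ℕ) + 1 = (i : ℕ) := by omega
          have := wt_le_two_mul_succ k (j : ℕ)
          rw [hji] at this
          exact this
        · have hD := wt_pos k (i : ℕ)
          nlinarith [mul_pos (show (0:ℝ) < |a| - 9/2 by linarith) hD]
    intro h0
    rw [Matrix.det_mul, Matrix.det_diagonal, h0, zero_mul] at hB
    exact hB rfl
  exact ⟨(Matrix.isUnit_iff_isUnit_det _).mpr (isUnit_iff_ne_zero.mpr hdet), hdet⟩
end

section
/- Let a be a real number with a = 3 or a > 5, and let n ≥ 1 be an integer. Then for all indices 1 ≤ i < j < k ≤ n+3, the n×n matrix B_n(a,1)^{i,j,k}, obtained by deleting the i-th, j-th and k-th rows of B_n(a,1), has nonzero determinant. -/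
/-- Entry in position `(r, c)` (0-indexed) of the `(n+1) × n` matrix `E_n(a,1)`. -/
def Eent (a : ℝ) (r c : ℕ) : ℝ :=
  if r = c then -a
  else if r + 1 = c then 1
  else if r = c + 1 then a
  else if r = c + 2 then -1
  else 0

/-- The `(n+3) × n` matrix `B_n(a,1)`: first row `(1,0,…,0)`, rows `2,…,n+2` are the
rows of `E_n(a,1)`, last row `(0,…,0,-1)`. -/
def Bmat (n : ℕ) (a : ℝ) : Matrix (Fin (n + 3)) (Fin n) ℝ :=
  Matrix.of fun i j =>
    if (i : ℕ) = 0 then (if (j : ℕ) = 0 then 1 else 0)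
    else if (i : ℕ) = n + 2 then (if (j : ℕ) = n - 1 then -1 else 0)
    else Eent a ((i : ℕ) - 1) (j : ℕ)

/-- `B_n(a,1)^{i,j,k}`: the `n × n` matrix obtained from `B_n(a,1)` by deleting its
`i`-th, `j`-th and `k`-th rows (rows counted `1,…,n+3`, with `i < j < k`). -/
def Bijk (n : ℕ) (a : ℝ) (i j k : ℕ) : Matrix (Fin n) (Fin n) ℝ :=
  Matrix.of fun r c =>
    Bmat n a
      (if (r : ℕ) + 1 < i then r.castSucc.castSucc.castSucc
       else if (r : ℕ) + 2 < j then r.succ.castSucc.castSucc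
       else if (r : ℕ) + 3 < k then r.succ.succ.castSucc
       else r.succ.succ.succ) c

/-! ### The fundamental solution of the recurrence -/

def useq (a : ℝ) : ℕ → ℝ
  | 0 => 1
  | 1 => a
  | 2 => a ^ 2 - a
  | (m+3) => a * useq a (m+2) - a * useq a (m+1) + useq a m

def Useq (a : ℝ) (m : ℤ) : ℝ := if 0 ≤ m then useq a m.toNat else 0

lemma Useq_neg (a : ℝ) {m : ℤ} (h : m < 0) : Useq a m = 0 := by
  simp [Useq, not_le.2 h]

lemma Useq_coe (a : ℝ) (t : ℕ) : Useq a (t : ℤ) = useq a t := by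
  simp [Useq]

lemma Useq_rec (a : ℝ) (m : ℤ) :
    Useq a m = a * Useq a (m-1) - a * Useq a (m-2) + Useq a (m-3)
      + (if m = 0 then 1 else 0) := by
  rcases lt_or_ge m 0 with h | h
  · rw [Useq_neg a h, Useq_neg a (by omega), Useq_neg a (by omega), Useq_neg a (by omega)]
    simp [show m ≠ 0 by omega]
  · rcases lt_or_ge m 3 with h2 | h2
    · have : m = 0 ∨ m = 1 ∨ m = 2 := by omega
      rcases this with rfl | rfl | rfl <;> norm_num [Useq, useq, show Int.toNat 2 = 2 from rfl] <;> ring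
    · obtain ⟨t, rfl⟩ : ∃ t : ℕ, m = (t:ℤ) + 3 := ⟨(m-3).toNat, by omega⟩
      rw [show (t:ℤ)+3-1 = ((t+2:ℕ):ℤ) by push_cast; ring,
          show (t:ℤ)+3-2 = ((t+1:ℕ):ℤ) by push_cast; ring,
          show (t:ℤ)+3-3 = ((t:ℕ):ℤ) by push_cast; ring,
          show (t:ℤ)+3 = ((t+3:ℕ):ℤ) by push_cast; ring,
          Useq_coe, Useq_coe, Useq_coe, Useq_coe,
          if_neg (by omega : ¬((t+3:ℕ):ℤ) = 0)]
      show useq a (t+3) = _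
      rw [show useq a (t+3) = a * useq a (t+2) - a * useq a (t+1) + useq a t from rfl]
      ring

/-! ### Padded vectors and the band structure of `Bmat` -/

def pad (n : ℕ) (v : Fin n → ℝ) (m : ℤ) : ℝ :=
  if h : 0 ≤ m ∧ m < n then v ⟨m.toNat, by omega⟩ else 0

lemma pad_coe (n : ℕ) (v : Fin n → ℝ) (c : Fin n) : pad n v (c : ℤ) = v c := by
  have hc := c.isLt
  rw [pad, dif_pos ⟨by positivity, by exact_mod_cast hc⟩]
  congr 1

lemma pad_out (n : ℕ) (v : Fin n → ℝ) (m : ℤ) (h : m < 0 ∨ (n:ℤ) ≤ m) :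
    pad n v m = 0 := by
  rw [pad, dif_neg (by omega)]

set_option maxHeartbeats 1000000 in
lemma Bmat_band (n : ℕ) (a : ℝ) (m : Fin (n+3)) (c : Fin n) :
    Bmat n a m c = (if (m:ℕ) = (c:ℕ) + 0 then (1:ℝ) else 0)
      - a * (if (m:ℕ) = (c:ℕ) + 1 then 1 else 0)
      + a * (if (m:ℕ) = (c:ℕ) + 2 then 1 else 0)
      - (if (m:ℕ) = (c:ℕ) + 3 then 1 else 0) := by
  have hc := c.isLt
  have hm := m.isLt
  simp only [Bmat, Eent, Matrix.of_apply]
  split_ifs <;> first | ring1 | (exfalso; omega)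

lemma sum_shift (n : ℕ) (v : Fin n → ℝ) (m k : ℕ) :
    ∑ c : Fin n, (if m = (c:ℕ) + k then (1:ℝ) else 0) * v c = pad n v ((m:ℤ) - k) := by
  by_cases h : k ≤ m ∧ m - k < n
  · have htv : ((⟨m - k, h.2⟩ : Fin n) : ℕ) = m - k := rfl
    rw [Finset.sum_eq_single (⟨m - k, h.2⟩ : Fin n)]
    · rw [if_pos (by rw [htv]; omega), one_mul, pad, dif_pos (by omega)]
      congr 1
      apply Fin.ext
      simp only [Fin.val_mk]
      omega
    · intro c _ hne
      rw [if_neg, zero_mul]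
      intro hmc
      exact hne (Fin.ext (by rw [htv]; omega))
    · intro h; exact absurd (Finset.mem_univ _) h
  · rw [Finset.sum_eq_zero, pad_out]
    · omega
    · intro c _
      rw [if_neg (by have := c.isLt; omega), zero_mul]

lemma sum_band (n : ℕ) (a : ℝ) (v : Fin n → ℝ) (m : Fin (n+3)) :
    ∑ c, Bmat n a m c * v c
      = pad n v (m:ℤ) - a * pad n v ((m:ℤ)-1) + a * pad n v ((m:ℤ)-2)
        - pad n v ((m:ℤ)-3) := by
  have key : ∀ c : Fin n, Bmat n a m c * v c
      = (if (m:ℕ) = (c:ℕ) + 0 then (1:ℝ) else 0) * v c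
        - a * ((if (m:ℕ) = (c:ℕ) + 1 then (1:ℝ) else 0) * v c)
        + a * ((if (m:ℕ) = (c:ℕ) + 2 then (1:ℝ) else 0) * v c)
        - (if (m:ℕ) = (c:ℕ) + 3 then (1:ℝ) else 0) * v c := by
    intro c; rw [Bmat_band]; ring
  rw [Finset.sum_congr rfl fun c _ => key c]
  rw [Finset.sum_sub_distrib, Finset.sum_add_distrib, Finset.sum_sub_distrib,
    ← Finset.mul_sum, ← Finset.mul_sum, sum_shift, sum_shift, sum_shift, sum_shift]
  norm_num

lemma row_surj (n i j k : ℕ) (hi : 1 ≤ i) (hij : i < j) (hjk : j < k) (hk : k ≤ n+3)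
    (m : ℕ) (hm : m ≤ n+2) (h1 : m + 1 ≠ i) (h2 : m + 1 ≠ j) (h3 : m + 1 ≠ k) :
    ∃ r : Fin n,
      ((if (r : ℕ) + 1 < i then r.castSucc.castSucc.castSucc
        else if (r : ℕ) + 2 < j then r.succ.castSucc.castSucc
        else if (r : ℕ) + 3 < k then r.succ.succ.castSucc
        else r.succ.succ.succ : Fin (n+3)) : ℕ) = m := by
  rcases lt_or_ge (m+1) i with c1 | c1
  · refine ⟨⟨m, by omega⟩, ?_⟩
    rw [if_pos (by simpa using c1)]
    simp
  · rcases lt_or_ge (m+1) j with c2 | c2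
    · refine ⟨⟨m-1, by omega⟩, ?_⟩
      rw [if_neg (by simp only [Fin.val_mk]; omega),
        if_pos (by simp only [Fin.val_mk]; omega)]
      simp only [Fin.coe_castSucc, Fin.val_succ, Fin.val_mk]
      omega
    · rcases lt_or_ge (m+1) k with c3 | c3
      · refine ⟨⟨m-2, by omega⟩, ?_⟩
        rw [if_neg (by simp only [Fin.val_mk]; omega),
          if_neg (by simp only [Fin.val_mk]; omega),
          if_pos (by simp only [Fin.val_mk]; omega)]
        simp only [Fin.coe_castSucc, Fin.val_succ, Fin.val_mk]
        omega
      · refine ⟨⟨m-3, by omega⟩, ?_⟩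
        rw [if_neg (by simp only [Fin.val_mk]; omega),
          if_neg (by simp only [Fin.val_mk]; omega),
          if_neg (by simp only [Fin.val_mk]; omega)]
        simp only [Fin.val_succ, Fin.val_mk]
        omega

/-! ### Closed form of `Useq` for `a = 3` -/

lemma useq3_aux (N : ℕ) : ∀ m : ℤ, -2 ≤ m → (m+2).toNat ≤ N →
    Useq 3 m = ((m:ℝ)+1)*((m:ℝ)+2)/2 := by
  induction N with
  | zero =>
    intro m hm h0
    have : m = -2 := by omega
    subst this
    rw [Useq_neg 3 (by norm_num)]
    norm_num
  | succ N IH =>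
    intro m hm hN
    rcases lt_or_ge m 1 with h | h
    · have : m = -2 ∨ m = -1 ∨ m = 0 := by omega
      rcases this with rfl | rfl | rfl
      · rw [Useq_neg 3 (by norm_num)]; norm_num
      · rw [Useq_neg 3 (by norm_num)]; norm_num
      · norm_num [Useq, useq]
    · have e := Useq_rec 3 m
      rw [if_neg (by omega), IH (m-1) (by omega) (by omega), IH (m-2) (by omega) (by omega),
        IH (m-3) (by omega) (by omega)] at e
      rw [e]; push_cast; ring

lemma useq3 (m : ℤ) (hm : -2 ≤ m) : Useq 3 m = ((m:ℝ)+1)*((m:ℝ)+2)/2 :=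
  useq3_aux (m+2).toNat m hm le_rfl

lemma det_fin_three_of' (a b c d e f g h i : ℝ) :
    Matrix.det !![a,b,c;d,e,f;g,h,i]
      = a*e*i - a*f*h - b*d*i + b*f*g + c*d*h - c*e*g := by
  simp [Matrix.det_fin_three]

lemma det3_a3 (n : ℕ) (D1 D2 D3 : ℤ) (h12 : D1 < D2) (h23 : D2 < D3) (h3 : D3 ≤ (n:ℤ)+2) :
    Matrix.det !![Useq 3 ((n:ℤ) - D1), Useq 3 ((n:ℤ) - D2), Useq 3 ((n:ℤ) - D3);
                  Useq 3 ((n:ℤ)+1 - D1), Useq 3 ((n:ℤ)+1 - D2), Useq 3 ((n:ℤ)+1 - D3);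
                  Useq 3 ((n:ℤ)+2 - D1), Useq 3 ((n:ℤ)+2 - D2), Useq 3 ((n:ℤ)+2 - D3)] ≠ 0 := by
  have key : Matrix.det !![Useq 3 ((n:ℤ) - D1), Useq 3 ((n:ℤ) - D2), Useq 3 ((n:ℤ) - D3);
      Useq 3 ((n:ℤ)+1 - D1), Useq 3 ((n:ℤ)+1 - D2), Useq 3 ((n:ℤ)+1 - D3);
      Useq 3 ((n:ℤ)+2 - D1), Useq 3 ((n:ℤ)+2 - D2), Useq 3 ((n:ℤ)+2 - D3)]
      = ((D2:ℝ)-D1)*((D3:ℝ)-D2)*((D3:ℝ)-D1)/2 := by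
    rw [det_fin_three_of']
    rw [useq3 _ (by omega), useq3 _ (by omega), useq3 _ (by omega),
      useq3 _ (by omega), useq3 _ (by omega), useq3 _ (by omega),
      useq3 _ (by omega), useq3 _ (by omega), useq3 _ (by omega)]
    push_cast
    ring
  rw [key]
  have h12' : (D1:ℝ) < (D2:ℝ) := by exact_mod_cast h12
  have h23' : (D2:ℝ) < (D3:ℝ) := by exact_mod_cast h23
  have h13' : (D1:ℝ) < (D3:ℝ) := lt_trans h12' h23'
  have hpos : (0:ℝ) < ((D2:ℝ)-D1)*((D3:ℝ)-D2)*((D3:ℝ)-D1)/2 := by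
    apply div_pos (mul_pos (mul_pos (by linarith) (by linarith)) (by linarith))
    norm_num
  exact ne_of_gt hpos

/-! ### Closed form of `Useq` for `a > 5` -/

noncomputable def rr (a : ℝ) : ℝ := ((a-1) + Real.sqrt ((a-1)^2 - 4))/2
noncomputable def cc1 (r : ℝ) : ℝ := -r/(r-1)^2
noncomputable def cc2 (r : ℝ) : ℝ := r^3/((r-1)^2*(r+1))
noncomputable def cc3 (r : ℝ) : ℝ := 1/((r-1)^2*(r+1))

lemma rr_gt_one {a : ℝ} (ha : 5 < a) : 1 < rr a := by
  have h1 : (0:ℝ) ≤ a - 3 := by linarith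
  have h2 : (a-3)^2 < (a-1)^2 - 4 := by nlinarith
  have h3 : (a-3 : ℝ) < Real.sqrt ((a-1)^2 - 4) := by
    nlinarith [Real.sq_sqrt (by nlinarith : (0:ℝ) ≤ (a-1)^2 - 4),
      Real.sqrt_nonneg ((a-1)^2 - 4)]
  have : a - 2 < rr a := by rw [rr]; linarith
  linarith

lemma rr_char {a : ℝ} (ha : 5 < a) : (rr a)^2 = (a-1) * rr a - 1 := by
  have h0 : (0:ℝ) ≤ (a-1)^2 - 4 := by nlinarith
  have hs := Real.sq_sqrt h0
  rw [rr]
  nlinarith [hs]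

lemma closed_aux {a : ℝ} (ha : 5 < a) (N : ℕ) : ∀ m : ℤ, -2 ≤ m → (m+2).toNat ≤ N →
    Useq a m = cc1 (rr a) + cc2 (rr a) * (rr a)^m + cc3 (rr a) * ((rr a)^m)⁻¹ := by
  set r := rr a with hrdef
  have hr1 : 1 < r := rr_gt_one ha
  have hr0 : r ≠ 0 := by linarith
  have hrm1 : r - 1 ≠ 0 := by intro h; nlinarith
  have hrp1 : r + 1 ≠ 0 := by intro h; nlinarith
  have hchar : r^2 = (a-1)*r - 1 := rr_char ha
  have hroot : r^3 - a*r^2 + a*r - 1 = 0 := by linear_combination (r-1)*hchar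
  have hs : r⁻¹ = (a-1) - r := by
    have h : r * ((a-1) - r) = 1 := by linear_combination -hchar
    exact inv_eq_of_mul_eq_one_right h
  have hroot_s : (r⁻¹)^3 - a*(r⁻¹)^2 + a*(r⁻¹) - 1 = 0 := by
    have hchar_s : (r⁻¹)^2 = (a-1)*(r⁻¹) - 1 := by rw [hs]; linear_combination hchar
    linear_combination (r⁻¹ - 1)*hchar_s
  have base : ∀ m : ℤ, -2 ≤ m → m ≤ 0 →
      Useq a m = cc1 r + cc2 r * r^m + cc3 r * (r^m)⁻¹ := by
    intro m hm hm0
    have h1 : m = -2 ∨ m = -1 ∨ m = 0 := by omega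
    rcases h1 with rfl | rfl | rfl
    · rw [Useq_neg a (by norm_num),
        show (-2:ℤ) = -((2:ℕ):ℤ) by norm_num, zpow_neg, zpow_natCast, inv_inv]
      rw [cc1, cc2, cc3]
      field_simp
      ring
    · rw [Useq_neg a (by norm_num),
        show (-1:ℤ) = -((1:ℕ):ℤ) by norm_num, zpow_neg, zpow_natCast, inv_inv]
      rw [cc1, cc2, cc3]
      field_simp
      ring
    · rw [show Useq a 0 = 1 by simp [Useq, useq], zpow_zero]
      rw [cc1, cc2, cc3]
      field_simp
      ring
  induction N with
  | zero =>
    intro m hm hN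
    exact base m hm (by omega)
  | succ N IH =>
    intro m hm hN
    rcases le_or_gt m 0 with h | h
    · exact base m hm h
    · have e := Useq_rec a m
      rw [if_neg (by omega), IH (m-1) (by omega) (by omega), IH (m-2) (by omega) (by omega),
        IH (m-3) (by omega) (by omega)] at e
      have e1 : r^(m-2) = r^(m-3) * r := by
        rw [show m-2 = (m-3)+1 by ring, zpow_add_one₀ hr0]
      have e2 : r^(m-1) = r^(m-3) * r^2 := by
        rw [show m-1 = (m-3)+1+1 by ring, zpow_add_one₀ hr0, zpow_add_one₀ hr0]; ring
      have e3 : r^m = r^(m-3) * r^3 := by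
        rw [show m = (m-3)+1+1+1 by ring, zpow_add_one₀ hr0, zpow_add_one₀ hr0,
          zpow_add_one₀ hr0]; ring
      rw [e, e1, e2, e3]
      rw [mul_inv, mul_inv, mul_inv]
      have i1 : (r^2)⁻¹ = (r⁻¹)^2 := by rw [inv_pow]
      have i2 : (r^3)⁻¹ = (r⁻¹)^3 := by rw [inv_pow]
      rw [i1, i2]
      linear_combination (-(cc2 r * r^(m-3))) * hroot - (cc3 r * (r^(m-3))⁻¹) * hroot_s

lemma closed {a : ℝ} (ha : 5 < a) (m : ℤ) (hm : -2 ≤ m) :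
    Useq a m = cc1 (rr a) + cc2 (rr a) * (rr a)^m + cc3 (rr a) * ((rr a)^m)⁻¹ :=
  closed_aux ha (m+2).toNat m hm le_rfl

set_option maxHeartbeats 1000000 in
lemma det3_a5 {a : ℝ} (ha : 5 < a) (n : ℕ) (D1 D2 D3 : ℤ)
    (h12 : D1 < D2) (h23 : D2 < D3) (h3 : D3 ≤ (n:ℤ)+2) :
    Matrix.det !![Useq a ((n:ℤ) - D1), Useq a ((n:ℤ) - D2), Useq a ((n:ℤ) - D3);
                  Useq a ((n:ℤ)+1 - D1), Useq a ((n:ℤ)+1 - D2), Useq a ((n:ℤ)+1 - D3);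
                  Useq a ((n:ℤ)+2 - D1), Useq a ((n:ℤ)+2 - D2), Useq a ((n:ℤ)+2 - D3)] ≠ 0 := by
  set r := rr a with hrdef
  have hr1 : 1 < r := rr_gt_one ha
  have hr0 : r ≠ 0 := by linarith
  have hrm1 : r - 1 ≠ 0 := by intro h; nlinarith
  have hrp1 : r + 1 ≠ 0 := by intro h; nlinarith
  set q1 := r ^ ((n:ℤ) - D1) with hq1
  set q2 := r ^ ((n:ℤ) - D2) with hq2
  set q3 := r ^ ((n:ℤ) - D3) with hq3
  have hq1p : 0 < q1 := zpow_pos (by linarith) _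
  have hq2p : 0 < q2 := zpow_pos (by linarith) _
  have hq3p : 0 < q3 := zpow_pos (by linarith) _
  have h21 : q2 < q1 := zpow_lt_zpow_right₀ hr1 (by omega)
  have h32 : q3 < q2 := zpow_lt_zpow_right₀ hr1 (by omega)
  have h31 : q3 < q1 := lt_trans h32 h21
  have hq10 : q1 ≠ 0 := ne_of_gt hq1p
  have hq20 : q2 ≠ 0 := ne_of_gt hq2p
  have hq30 : q3 ≠ 0 := ne_of_gt hq3p
  have E1 : ∀ D : ℤ, (n:ℤ)+1-D = ((n:ℤ)-D)+1 := fun D => by ring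
  have E2 : ∀ D : ℤ, (n:ℤ)+2-D = ((n:ℤ)-D)+1+1 := fun D => by ring
  have hM3 : !![Useq a ((n:ℤ) - D1), Useq a ((n:ℤ) - D2), Useq a ((n:ℤ) - D3);
      Useq a ((n:ℤ)+1 - D1), Useq a ((n:ℤ)+1 - D2), Useq a ((n:ℤ)+1 - D3);
      Useq a ((n:ℤ)+2 - D1), Useq a ((n:ℤ)+2 - D2), Useq a ((n:ℤ)+2 - D3)]
      = !![(1:ℝ),1,1; 1,r,r⁻¹; 1,r^2,(r⁻¹)^2] *
        !![cc1 r, cc1 r, cc1 r; cc2 r*q1, cc2 r*q2, cc2 r*q3;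
           cc3 r*q1⁻¹, cc3 r*q2⁻¹, cc3 r*q3⁻¹] := by
    ext s t
    fin_cases s <;> fin_cases t <;>
      · simp [Matrix.mul_apply, Fin.sum_univ_three]
        try rw [closed ha _ (by omega)]
        try simp only [← hrdef, E1, E2, zpow_add_one₀ hr0]
        try simp only [← hq1, ← hq2, ← hq3]
        try field_simp
        try ring1
  rw [hM3, Matrix.det_mul]
  apply mul_ne_zero
  · rw [det_fin_three_of']
    have hinv1 : r⁻¹ < 1 := by
      rw [inv_lt_one_iff₀]; right; exact hr1
    have key : (1:ℝ)*r*(r⁻¹)^2 - 1*r⁻¹*r^2 - 1*1*(r⁻¹)^2 + 1*r⁻¹*1 + 1*1*r^2 - 1*r*1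
        = (r-1)*(r⁻¹-1)*(r⁻¹-r) := by
      field_simp
      ring
    rw [key]
    apply mul_ne_zero (mul_ne_zero (by linarith) (by linarith)) (by nlinarith)
  · rw [det_fin_three_of']
    have key : cc1 r*(cc2 r*q2)*(cc3 r*q3⁻¹) - cc1 r*(cc2 r*q3)*(cc3 r*q2⁻¹)
        - cc1 r*(cc2 r*q1)*(cc3 r*q3⁻¹) + cc1 r*(cc2 r*q3)*(cc3 r*q1⁻¹)
        + cc1 r*(cc2 r*q1)*(cc3 r*q2⁻¹) - cc1 r*(cc2 r*q2)*(cc3 r*q1⁻¹)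
        = cc1 r * cc2 r * cc3 r *
          (-((q1-q2)*(q2-q3)*(q1-q3))) / (q1*q2*q3) := by
      field_simp
      ring
    rw [key]
    apply div_ne_zero
    · apply mul_ne_zero
      apply mul_ne_zero
      apply mul_ne_zero
      · rw [cc1]
        apply div_ne_zero (by intro h; nlinarith) (by positivity)
      · rw [cc2]
        apply div_ne_zero (by positivity) (by positivity)
      · rw [cc3]
        apply div_ne_zero (by norm_num) (by positivity)
      · have hX : (0:ℝ) < (q1-q2)*(q2-q3)*(q1-q3) :=
          mul_pos (mul_pos (by linarith) (by linarith)) (by linarith)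
        intro h; linarith
    · positivity

/-! ### Main theorem -/

open scoped Matrix

set_option maxHeartbeats 2000000 in
theorem stmt11 (a : ℝ) (ha : a = 3 ∨ 5 < a) (n : ℕ) (hn : 1 ≤ n)
    (i j k : ℕ) (hi : 1 ≤ i) (hij : i < j) (hjk : j < k) (hk : k ≤ n + 3) :
    (Bijk n a i j k).det ≠ 0 := by
  intro hdet
  obtain ⟨v, hv0, hv⟩ := (Matrix.exists_mulVec_eq_zero_iff).mpr hdet
  set D1 : ℤ := (i:ℤ) - 1 with hD1
  set D2 : ℤ := (j:ℤ) - 1 with hD2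
  set D3 : ℤ := (k:ℤ) - 1 with hD3
  have key : ∀ m : ℤ, 0 ≤ m → m ≤ (n:ℤ)+2 → m ≠ D1 → m ≠ D2 → m ≠ D3 →
      pad n v m - a * pad n v (m-1) + a * pad n v (m-2) - pad n v (m-3) = 0 := by
    intro m h0 h2 e1 e2 e3
    obtain ⟨mn, rfl⟩ : ∃ mn : ℕ, m = (mn:ℤ) := ⟨m.toNat, by omega⟩
    obtain ⟨r, hr⟩ := row_surj n i j k hi hij hjk hk mn (by omega) (by omega) (by omega) (by omega)
    have hvr := congrFun hv r
    simp only [Matrix.mulVec, dotProduct, Pi.zero_apply] at hvr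
    simp only [Bijk, Matrix.of_apply] at hvr
    rw [sum_band n a v] at hvr
    rw [hr] at hvr
    exact hvr
  set z1 : ℝ := pad n v D1 - a * pad n v (D1-1) + a * pad n v (D1-2) - pad n v (D1-3) with hz1
  set z2 : ℝ := pad n v D2 - a * pad n v (D2-1) + a * pad n v (D2-2) - pad n v (D2-3) with hz2
  set z3 : ℝ := pad n v D3 - a * pad n v (D3-1) + a * pad n v (D3-2) - pad n v (D3-3) with hz3
  have combo : ∀ m : ℤ, 0 ≤ m → m ≤ (n:ℤ)+2 →
      pad n v m - a * pad n v (m-1) + a * pad n v (m-2) - pad n v (m-3)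
        = (if m = D1 then z1 else 0) + (if m = D2 then z2 else 0)
          + (if m = D3 then z3 else 0) := by
    intro m h0 h2
    by_cases e1 : m = D1
    · rw [e1, if_pos rfl, if_neg (by omega), if_neg (by omega), ← hz1]
      ring
    · by_cases e2 : m = D2
      · rw [e2, if_pos rfl, if_neg (by omega), if_neg (by omega), ← hz2]
        ring
      · by_cases e3 : m = D3
        · rw [e3, if_pos rfl, if_neg (by omega), if_neg (by omega), ← hz3]
          ring
        · rw [key m h0 h2 e1 e2 e3, if_neg e1, if_neg e2, if_neg e3]
          ring
  have rep : ∀ N : ℕ, ∀ m : ℤ, (m+3).toNat ≤ N → m ≤ (n:ℤ)+2 →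
      pad n v m = z1 * Useq a (m-D1) + z2 * Useq a (m-D2) + z3 * Useq a (m-D3) := by
    intro N
    induction N with
    | zero =>
      intro m hmN h2
      have hm : m < 0 := by omega
      rw [pad_out n v m (Or.inl hm), Useq_neg a (by omega), Useq_neg a (by omega),
        Useq_neg a (by omega)]
      ring
    | succ N IH =>
      intro m hmN h2
      rcases lt_or_ge m 0 with hm | hm
      · rw [pad_out n v m (Or.inl hm), Useq_neg a (by omega), Useq_neg a (by omega),
          Useq_neg a (by omega)]
        ring
      · have hc := combo m hm h2
        have IH1 : pad n v (m-1)
            = z1 * Useq a (m-D1-1) + z2 * Useq a (m-D2-1) + z3 * Useq a (m-D3-1) := by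
          rw [IH (m-1) (by omega) (by omega),
            show m-1-D1 = m-D1-1 by ring, show m-1-D2 = m-D2-1 by ring,
            show m-1-D3 = m-D3-1 by ring]
        have IH2 : pad n v (m-2)
            = z1 * Useq a (m-D1-2) + z2 * Useq a (m-D2-2) + z3 * Useq a (m-D3-2) := by
          rw [IH (m-2) (by omega) (by omega),
            show m-2-D1 = m-D1-2 by ring, show m-2-D2 = m-D2-2 by ring,
            show m-2-D3 = m-D3-2 by ring]
        have IH3 : pad n v (m-3)
            = z1 * Useq a (m-D1-3) + z2 * Useq a (m-D2-3) + z3 * Useq a (m-D3-3) := by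
          rw [IH (m-3) (by omega) (by omega),
            show m-3-D1 = m-D1-3 by ring, show m-3-D2 = m-D2-3 by ring,
            show m-3-D3 = m-D3-3 by ring]
        have u1 := Useq_rec a (m-D1)
        have u2 := Useq_rec a (m-D2)
        have u3 := Useq_rec a (m-D3)
        have i1 : (if m = D1 then z1 else 0) = z1 * (if m - D1 = 0 then 1 else 0) := by
          by_cases h : m = D1
          · rw [if_pos h, if_pos (by omega)]; ring
          · rw [if_neg h, if_neg (by omega)]; ring
        have i2 : (if m = D2 then z2 else 0) = z2 * (if m - D2 = 0 then 1 else 0) := by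
          by_cases h : m = D2
          · rw [if_pos h, if_pos (by omega)]; ring
          · rw [if_neg h, if_neg (by omega)]; ring
        have i3 : (if m = D3 then z3 else 0) = z3 * (if m - D3 = 0 then 1 else 0) := by
          by_cases h : m = D3
          · rw [if_pos h, if_pos (by omega)]; ring
          · rw [if_neg h, if_neg (by omega)]; ring
        linear_combination hc + a * IH1 - a * IH2 + IH3 - z1*u1 - z2*u2 - z3*u3 + i1 + i2 + i3
  have E0 : z1 * Useq a ((n:ℤ)-D1) + z2 * Useq a ((n:ℤ)-D2) + z3 * Useq a ((n:ℤ)-D3) = 0 := by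
    have h := rep (((n:ℤ)+3).toNat) (n:ℤ) (by omega) (by omega)
    rw [pad_out n v _ (Or.inr (by omega))] at h
    linarith [h]
  have Ea : z1 * Useq a ((n:ℤ)+1-D1) + z2 * Useq a ((n:ℤ)+1-D2) + z3 * Useq a ((n:ℤ)+1-D3) = 0 := by
    have h := rep (((n:ℤ)+4).toNat) ((n:ℤ)+1) (by omega) (by omega)
    rw [pad_out n v _ (Or.inr (by omega))] at h
    linarith [h]
  have Eb : z1 * Useq a ((n:ℤ)+2-D1) + z2 * Useq a ((n:ℤ)+2-D2) + z3 * Useq a ((n:ℤ)+2-D3) = 0 := by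
    have h := rep (((n:ℤ)+5).toNat) ((n:ℤ)+2) (by omega) (by omega)
    rw [pad_out n v _ (Or.inr (by omega))] at h
    linarith [h]
  set M3 : Matrix (Fin 3) (Fin 3) ℝ :=
    !![Useq a ((n:ℤ) - D1), Useq a ((n:ℤ) - D2), Useq a ((n:ℤ) - D3);
       Useq a ((n:ℤ)+1 - D1), Useq a ((n:ℤ)+1 - D2), Useq a ((n:ℤ)+1 - D3);
       Useq a ((n:ℤ)+2 - D1), Useq a ((n:ℤ)+2 - D2), Useq a ((n:ℤ)+2 - D3)] with hM3def
  have hdet3 : M3.det ≠ 0 := by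
    rw [hM3def]
    rcases ha with rfl | ha5
    · exact det3_a3 n D1 D2 D3 (by omega) (by omega) (by omega)
    · exact det3_a5 ha5 n D1 D2 D3 (by omega) (by omega) (by omega)
  have hMv : M3 *ᵥ ![z1, z2, z3] = 0 := by
    funext s
    fin_cases s <;>
      · simp [hM3def, Matrix.mulVec, dotProduct, Fin.sum_univ_three]
        linarith [E0, Ea, Eb]
  have hzero : ![z1, z2, z3] = 0 := by
    have hinv := Matrix.nonsing_inv_mul M3 (isUnit_iff_ne_zero.mpr hdet3)
    calc ![z1,z2,z3] = (1 : Matrix (Fin 3) (Fin 3) ℝ) *ᵥ ![z1,z2,z3] :=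
          (Matrix.one_mulVec _).symm
      _ = (M3⁻¹ * M3) *ᵥ ![z1,z2,z3] := by rw [hinv]
      _ = M3⁻¹ *ᵥ (M3 *ᵥ ![z1,z2,z3]) := by rw [Matrix.mulVec_mulVec]
      _ = 0 := by rw [hMv, Matrix.mulVec_zero]
  have hza : z1 = 0 := by have := congrFun hzero 0; simpa using this
  have hzb : z2 = 0 := by have := congrFun hzero 1; simpa using this
  have hzc : z3 = 0 := by have := congrFun hzero 2; simpa using this
  apply hv0
  funext c
  have h := rep (((c:ℤ)+3).toNat) (c:ℤ) (by omega) (by have := c.isLt; omega)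
  rw [pad_coe] at h
  rw [h, hza, hzb, hzc]
  simp
end

section
/- Let a be a real number with |a| > 5, and let n ≥ 1 be an integer. Then for all indices 1 ≤ i < j < k ≤ n+3, the n×n matrix B̃_n(a,1)^{i,j,k}, obtained by deleting the i-th, j-th and k-th rows of B̃_n(a,1), has nonzero determinant. -/
/-- Entry in position `(r, c)` (0-indexed) of the `(n+1) × n` matrix `Ẽ_n(a,1)`. -/
def Etent (a : ℝ) (r c : ℕ) : ℝ :=
  if r = c then a
  else if r + 1 = c then 1
  else if r = c + 1 then a
  else if r = c + 2 then 1
  else 0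

/-- The `(n+3) × n` matrix `B̃_n(a,1)`: first row `(1,0,…,0)`, rows `2,…,n+2` are the
rows of `Ẽ_n(a,1)`, last row `(0,…,0,1)`. -/
def Btmat (n : ℕ) (a : ℝ) : Matrix (Fin (n + 3)) (Fin n) ℝ :=
  Matrix.of fun i j =>
    if (i : ℕ) = 0 then (if (j : ℕ) = 0 then 1 else 0)
    else if (i : ℕ) = n + 2 then (if (j : ℕ) = n - 1 then 1 else 0)
    else Etent a ((i : ℕ) - 1) (j : ℕ)

/-- `B̃_n(a,1)^{i,j,k}`: the `n × n` matrix obtained from `B̃_n(a,1)` by deleting its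
`i`-th, `j`-th and `k`-th rows (rows counted `1,…,n+3`, with `i < j < k`). -/
def Btijk (n : ℕ) (a : ℝ) (i j k : ℕ) : Matrix (Fin n) (Fin n) ℝ :=
  Matrix.of fun r c =>
    Btmat n a
      (if (r : ℕ) + 1 < i then r.castSucc.castSucc.castSucc
       else if (r : ℕ) + 2 < j then r.succ.castSucc.castSucc
       else if (r : ℕ) + 3 < k then r.succ.succ.castSucc
       else r.succ.succ.succ) c

/-- Auxiliary: zero-padded coefficient vector, shifted by 3. -/
def Wv {n : ℕ} (v : Fin n → ℝ) (t : ℕ) : ℝ :=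
  if h : 3 ≤ t ∧ t < n + 3 then v ⟨t - 3, by omega⟩ else 0

lemma entry_eq (n : ℕ) (hn : 1 ≤ n) (a : ℝ) (m : ℕ) (hm : m < n+3) (c : Fin n) :
    Btmat n a ⟨m, hm⟩ c =
      (if (c:ℕ) + 0 = m then (1:ℝ) else 0) + (if (c:ℕ) + 1 = m then a else 0)
      + (if (c:ℕ) + 2 = m then a else 0) + (if (c:ℕ) + 3 = m then (1:ℝ) else 0) := by
  rcases c with ⟨c, hc⟩
  simp only [Btmat, Etent, Matrix.of_apply]
  split_ifs <;> first | omega | ring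

lemma ind_sum {n : ℕ} (v : Fin n → ℝ) (x : ℝ) (s t : ℕ) :
    (∑ c : Fin n, (if (c : ℕ) + s = t then x else 0) * v c)
      = x * (if h : s ≤ t ∧ t - s < n then v ⟨t - s, h.2⟩ else 0) := by
  by_cases h : s ≤ t ∧ t - s < n
  · rw [dif_pos h, Finset.sum_eq_single (⟨t - s, h.2⟩ : Fin n)]
    · rw [if_pos (by simp; omega)]
    · intro b _ hb
      rw [if_neg, zero_mul]
      intro hbt
      exact hb (Fin.ext (by simp; omega))
    · simp
  · rw [dif_neg h, mul_zero]
    apply Finset.sum_eq_zero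
    intro c _
    rw [if_neg (by omega), zero_mul]

lemma row_dot (n : ℕ) (hn : 1 ≤ n) (a : ℝ) (v : Fin n → ℝ) (m : ℕ) (hm : m < n + 3) :
    (∑ c : Fin n, Btmat n a ⟨m, hm⟩ c * v c)
      = Wv v (m+3) + a * Wv v (m+2) + a * Wv v (m+1) + Wv v m := by
  have key : ∀ c : Fin n, Btmat n a ⟨m, hm⟩ c * v c =
      (if (c:ℕ) + 0 = m then (1:ℝ) else 0) * v c + (if (c:ℕ) + 1 = m then a else 0) * v c
      + (if (c:ℕ) + 2 = m then a else 0) * v c + (if (c:ℕ) + 3 = m then (1:ℝ) else 0) * v c := by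
    intro c; rw [entry_eq n hn a m hm c]; ring
  rw [Finset.sum_congr rfl (fun c _ => key c)]
  rw [Finset.sum_add_distrib, Finset.sum_add_distrib, Finset.sum_add_distrib,
    ind_sum v 1 0 m, ind_sum v a 1 m, ind_sum v a 2 m, ind_sum v 1 3 m]
  have e0 : (if h : 0 ≤ m ∧ m - 0 < n then v ⟨m - 0, h.2⟩ else 0) = Wv v (m+3) := by
    rw [Wv]; split_ifs <;> first | omega | rfl | (congr 1; simp only [Fin.mk.injEq]; omega)
  have e1 : (if h : 1 ≤ m ∧ m - 1 < n then v ⟨m - 1, h.2⟩ else 0) = Wv v (m+2) := by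
    rw [Wv]; split_ifs <;> first | omega | rfl | (congr 1; simp only [Fin.mk.injEq]; omega)
  have e2 : (if h : 2 ≤ m ∧ m - 2 < n then v ⟨m - 2, h.2⟩ else 0) = Wv v (m+1) := by
    rw [Wv]; split_ifs <;> first | omega | rfl | (congr 1; simp only [Fin.mk.injEq]; omega)
  have e3 : (if h : 3 ≤ m ∧ m - 3 < n then v ⟨m - 3, h.2⟩ else 0) = Wv v m := by
    rw [Wv]; split_ifs <;> first | omega | rfl | (congr 1; simp only [Fin.mk.injEq]; omega)
  rw [e0, e1, e2, e3]; ring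

lemma kept_row (n : ℕ) (a : ℝ) (i j k : ℕ) (hi : 1 ≤ i) (hij : i < j) (hjk : j < k)
    (hk : k ≤ n + 3) (m : ℕ) (hm : m < n + 3)
    (h1 : m ≠ i - 1) (h2 : m ≠ j - 1) (h3 : m ≠ k - 1) :
    ∃ r : Fin n, ∀ c : Fin n, Btijk n a i j k r c = Btmat n a ⟨m, hm⟩ c := by
  rcases lt_trichotomy m (i-1) with hc1 | hc1 | hc1
  · refine ⟨⟨m, by omega⟩, fun c => ?_⟩
    simp only [Btijk, Matrix.of_apply]
    rw [if_pos (by omega)]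
    congr 1
  · omega
  · rcases lt_trichotomy m (j-1) with hc2 | hc2 | hc2
    · refine ⟨⟨m - 1, by omega⟩, fun c => ?_⟩
      simp only [Btijk, Matrix.of_apply]
      rw [if_neg (by omega), if_pos (by omega)]
      congr 1
      exact Fin.ext (by simp only [Fin.coe_castSucc, Fin.val_succ, Fin.val_mk]; omega)
    · omega
    · rcases lt_trichotomy m (k-1) with hc3 | hc3 | hc3
      · refine ⟨⟨m - 2, by omega⟩, fun c => ?_⟩
        simp only [Btijk, Matrix.of_apply]
        rw [if_neg (by omega), if_neg (by omega), if_pos (by omega)]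
        congr 1
        exact Fin.ext (by simp only [Fin.coe_castSucc, Fin.val_succ, Fin.val_mk]; omega)
      · omega
      · refine ⟨⟨m - 3, by omega⟩, fun c => ?_⟩
        simp only [Btijk, Matrix.of_apply]
        rw [if_neg (by omega), if_neg (by omega), if_neg (by omega)]
        congr 1
        exact Fin.ext (by simp only [Fin.coe_castSucc, Fin.val_succ, Fin.val_mk]; omega)

lemma shift_sum (n : ℕ) (W : ℕ → ℝ) (hlo : ∀ t, t < 3 → W t = 0)
    (hhi : ∀ t, n + 3 ≤ t → W t = 0) (x : ℝ) (s : ℕ) (hs : s ≤ 3) :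
    (∑ m ∈ Finset.range (n+3), W (m + s) * x ^ (m + s))
      = ∑ t ∈ Finset.range (n+6), W t * x ^ t := by
  have h1 : (n+6) = s + ((n+3) + (3 - s)) := by omega
  conv_rhs => rw [h1, Finset.sum_range_add, Finset.sum_range_add]
  have z1 : ∑ t ∈ Finset.range s, W t * x ^ t = 0 :=
    Finset.sum_eq_zero fun t ht => by
      rw [hlo t (by have := Finset.mem_range.mp ht; omega), zero_mul]
  have z2 : ∑ m ∈ Finset.range (3 - s), W (s + (n + 3 + m)) * x ^ (s + (n+3+m)) = 0 :=
    Finset.sum_eq_zero fun t _ => by rw [hhi _ (by omega), zero_mul]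
  rw [z1, z2, zero_add, add_zero]
  exact Finset.sum_congr rfl fun m _ => by rw [Nat.add_comm s m]

lemma key_identity (n : ℕ) (a : ℝ) (W : ℕ → ℝ) (hlo : ∀ t, t < 3 → W t = 0)
    (hhi : ∀ t, n + 3 ≤ t → W t = 0) (x : ℝ) :
    (∑ m ∈ Finset.range (n+3),
        (W (m+3) + a * W (m+2) + a * W (m+1) + W m) * x ^ m) * x ^ 3
      = (1 + a * x + a * x^2 + x^3) * ∑ t ∈ Finset.range (n+6), W t * x ^ t := by
  have e : ∀ m : ℕ, (W (m+3) + a * W (m+2) + a * W (m+1) + W m) * x ^ m * x ^ 3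
      = W (m+3) * x ^ (m+3) + (a * (W (m+2) * x ^ (m+2))) * x
        + (a * (W (m+1) * x ^ (m+1))) * x^2 + (W m * x ^ m) * x^3 := by
    intro m; rw [pow_add, pow_add, pow_add]; ring
  rw [Finset.sum_mul]
  rw [Finset.sum_congr rfl fun m _ => e m]
  rw [Finset.sum_add_distrib, Finset.sum_add_distrib, Finset.sum_add_distrib,
    ← Finset.sum_mul, ← Finset.sum_mul, ← Finset.sum_mul, ← Finset.mul_sum, ← Finset.mul_sum]
  rw [shift_sum n W hlo hhi x 3 (by norm_num), shift_sum n W hlo hhi x 2 (by norm_num),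
    shift_sum n W hlo hhi x 1 (by norm_num)]
  have h2 : (∑ m ∈ Finset.range (n+3), W m * x ^ m) = ∑ t ∈ Finset.range (n+6), W t * x ^ t := by
    have h1 : (n+6) = (n+3) + 3 := by omega
    conv_rhs => rw [h1, Finset.sum_range_add]
    rw [Finset.sum_eq_zero (fun t _ => by rw [hhi (n+3+t) (by omega), zero_mul] :
      ∀ t ∈ Finset.range 3, W (n+3+t) * x ^ (n+3+t) = 0), add_zero]
  rw [h2]; ring

lemma three_eq_zero (R : ℝ) (hρ : 3 < |R|) (I p q : ℕ) (α β γ : ℝ)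
    (e1 : α * (-1:ℝ)^I + β * (-1:ℝ)^(I+p+1) + γ * (-1:ℝ)^(I+p+q+2) = 0)
    (e2 : α * R^I + β * R^(I+p+1) + γ * R^(I+p+q+2) = 0)
    (e3 : α * (R⁻¹)^I + β * (R⁻¹)^(I+p+1) + γ * (R⁻¹)^(I+p+q+2) = 0) :
    α = 0 ∧ β = 0 ∧ γ = 0 := by
  have hR0 : R ≠ 0 := by intro h; rw [h] at hρ; simp at hρ; linarith
  have hu : ∀ t : ℕ, R ^ t * (R⁻¹) ^ t = 1 := fun t => by
    rw [← mul_pow, mul_inv_cancel₀ hR0, one_pow]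
  have hm1 : ((-1:ℝ))^I * (-1:ℝ)^I = 1 := by
    rw [← pow_add]; exact Even.neg_one_pow ⟨I, rfl⟩
  have f1 : α + β * (-1:ℝ)^(p+1) + γ * (-1:ℝ)^(p+q+2) = 0 := by
    linear_combination (-1:ℝ)^I * e1 - (α + β*(-1:ℝ)^(p+1) + γ*(-1:ℝ)^(p+q+2)) * hm1
  have f2 : α + β * R^(p+1) + γ * R^(p+q+2) = 0 := by
    linear_combination (R⁻¹)^I * e2 - (α + β*R^(p+1) + γ*R^(p+q+2)) * hu I
  have f3 : α * R^(p+q+2) + β * R^(q+1) + γ = 0 := by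
    linear_combination R^(I+p+q+2) * e3 - α * R^(p+q+2) * hu I - β * R^(q+1) * hu (I+p+1)
      - γ * hu (I+p+q+2)
  set M : Matrix (Fin 3) (Fin 3) ℝ :=
    !![1, (-1:ℝ)^(p+1), (-1:ℝ)^(p+q+2); 1, R^(p+1), R^(p+q+2); R^(p+q+2), R^(q+1), 1] with hM
  have hMv : M.mulVec ![α, β, γ] = 0 := by
    funext idx
    fin_cases idx <;>
      simp [hM, Matrix.mulVec, dotProduct, Fin.sum_univ_three] <;>
      [linear_combination f1; linear_combination f2; linear_combination f3]
  set ρ := |R| with hrho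
  have hρ1 : (1:ℝ) ≤ ρ := by linarith
  set c : ℝ := ρ^(2*p+2*q+2) with hc
  have hc1 : (1:ℝ) ≤ c := one_le_pow₀ hρ1
  have hb1 : ρ^(p+1) ≤ c := pow_le_pow_right₀ hρ1 (by omega)
  have hb4 : ρ^(q+1) ≤ c := pow_le_pow_right₀ hρ1 (by omega)
  have hsucc : ρ^(2*p+2*q+3) = c * ρ := by rw [hc, ← pow_succ]
  have hb2 : ρ^(p+2*q+3) ≤ c * ρ := by
    rw [← hsucc]; exact pow_le_pow_right₀ hρ1 (by omega)
  have hb5 : ρ^(2*p+q+3) ≤ c * ρ := by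
    rw [← hsucc]; exact pow_le_pow_right₀ hρ1 (by omega)
  have hmain : ρ^(2*p+2*q+4) = c * ρ^2 := by rw [hc, ← pow_add]
  set A : ℝ := (-1:ℝ)^(p+1) * R^(2*p+2*q+4) with hA
  set E : ℝ := R^(p+1) + (-(R^(p+2*q+3))) + (-((-1:ℝ)^(p+1))) + (-1:ℝ)^(p+q+2)*R^(q+1)
        + (-((-1:ℝ)^(p+q+2)*R^(2*p+q+3))) with hE
  have hdet_eq : M.det = A + E := by
    rw [hM, Matrix.det_fin_three, hA, hE]
    norm_num [Matrix.cons_val_zero, Matrix.cons_val_one, Matrix.head_cons, Matrix.cons_val_two, Matrix.tail_cons]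
    ring
  have habs : ∀ (x : ℝ) (t : ℕ), |(-1:ℝ)^t * x| = |x| := fun x t => by
    rw [abs_mul, abs_pow, abs_neg, abs_one, one_pow, one_mul]
  have h1 : |A| = ρ^(2*p+2*q+4) := by rw [hA, habs, abs_pow]
  have h2 : |E| ≤ ρ^(p+1) + ρ^(p+2*q+3) + 1 + ρ^(q+1) + ρ^(2*p+q+3) := by
    rw [hE]
    refine le_trans (abs_add_le _ _) (add_le_add (le_trans (abs_add_le _ _) (add_le_add
      (le_trans (abs_add_le _ _) (add_le_add (le_trans (abs_add_le _ _) (add_le_add ?_ ?_)) ?_)) ?_)) ?_)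
    · rw [abs_pow]
    · rw [abs_neg, abs_pow]
    · rw [abs_neg, abs_pow, abs_neg, abs_one, one_pow]
    · rw [habs, abs_pow]
    · rw [abs_neg, habs, abs_pow]
  have h3 : ρ^(2*p+2*q+4) ≤ |A + E| + |E| := by
    calc ρ^(2*p+2*q+4) = |A| := h1.symm
      _ = |(A + E) + (-E)| := by ring_nf
      _ ≤ |A + E| + |-E| := abs_add_le _ _
      _ = |A + E| + |E| := by rw [abs_neg]
  have hpos : ρ^(p+1) + ρ^(p+2*q+3) + 1 + ρ^(q+1) + ρ^(2*p+q+3) < ρ^(2*p+2*q+4) := by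
    rw [hmain]
    nlinarith [mul_pos (show (0:ℝ) < c by linarith)
      (mul_pos (show (0:ℝ) < ρ - 3 by linarith) (show (0:ℝ) < ρ + 1 by linarith)),
      hb1, hb2, hb4, hb5, hc1, hρ]
  have hdetne : M.det ≠ 0 := by
    intro h0
    rw [hdet_eq] at h0
    rw [h0] at h3
    simp only [abs_zero, zero_add] at h3
    linarith
  have hu0 : (![α,β,γ] : Fin 3 → ℝ) = 0 := by
    have hinv : M⁻¹.mulVec (M.mulVec ![α,β,γ]) = ![α,β,γ] := by
      rw [Matrix.mulVec_mulVec, Matrix.nonsing_inv_mul M (Ne.isUnit hdetne), Matrix.one_mulVec]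
    rw [hMv, Matrix.mulVec_zero] at hinv; exact hinv.symm
  refine ⟨?_, ?_, ?_⟩
  · have := congrFun hu0 0; simpa using this
  · have := congrFun hu0 1; simpa using this
  · have := congrFun hu0 2; simpa using this

lemma exists_root (a : ℝ) (ha : 5 < |a|) :
    ∃ R : ℝ, 3 < |R| ∧ 1 + a*R + a*R^2 + R^3 = 0
      ∧ 1 + a*R⁻¹ + a*(R⁻¹)^2 + (R⁻¹)^3 = 0 := by
  have hb : 4 < |a - 1| := by
    have := abs_sub_abs_le_abs_sub a 1
    simp only [abs_one] at this
    linarith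
  have hD : 12 < (a-1)^2 - 4 := by nlinarith [sq_abs (a-1)]
  set s := Real.sqrt ((a-1)^2 - 4) with hs
  have hs2 : s^2 = (a-1)^2 - 4 := Real.sq_sqrt (by linarith)
  have hs3 : 3 < s := by nlinarith [Real.sqrt_nonneg ((a-1)^2 - 4)]
  set R := if a - 1 ≤ 0 then (-(a-1)+s)/2 else (-(a-1)-s)/2 with hR
  have hroot : R^2 + (a-1)*R + 1 = 0 := by
    rw [hR]; split_ifs <;> linear_combination hs2 / 4
  have hRabs : 3 < |R| := by
    rw [hR]; split_ifs with hcase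
    · have hba : -(a-1) > 4 := by rw [abs_of_nonpos hcase] at hb; linarith
      rw [abs_of_pos (by linarith)]; linarith
    · have hba : (a-1) > 4 := by rw [abs_of_pos (by linarith)] at hb; linarith
      rw [abs_of_neg (by linarith)]; linarith
  have hR0 : R ≠ 0 := by
    intro h; rw [h] at hRabs; simp at hRabs; linarith
  clear_value s R
  refine ⟨R, hRabs, by linear_combination (R+1) * hroot, ?_⟩
  field_simp
  linear_combination (R+1) * hroot

theorem stmt12 (a : ℝ) (ha : 5 < |a|) (n : ℕ) (hn : 1 ≤ n)
    (i j k : ℕ) (hi : 1 ≤ i) (hij : i < j) (hjk : j < k) (hk : k ≤ n + 3) :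
    (Btijk n a i j k).det ≠ 0 := by
  classical
  rw [Ne, ← Matrix.exists_mulVec_eq_zero_iff]
  rintro ⟨v, hv0, hv⟩
  apply hv0
  have hlo : ∀ t, t < 3 → Wv v t = 0 := fun t ht => by rw [Wv, dif_neg (by omega)]
  have hhi : ∀ t, n + 3 ≤ t → Wv v t = 0 := fun t ht => by rw [Wv, dif_neg (by omega)]
  set F : ℕ → ℝ := fun m => Wv v (m+3) + a * Wv v (m+2) + a * Wv v (m+1) + Wv v m with hF
  have hFkept : ∀ m, (hm : m < n+3) → m ≠ i-1 → m ≠ j-1 → m ≠ k-1 → F m = 0 := by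
    intro m hm h1 h2 h3
    obtain ⟨r, hr⟩ := kept_row n a i j k hi hij hjk hk m hm h1 h2 h3
    have hrow := congrFun hv r
    simp only [Matrix.mulVec, dotProduct, Pi.zero_apply] at hrow
    simp only [hF]
    rw [← row_dot n hn a v m hm, ← hrow]
    exact Finset.sum_congr rfl fun c _ => by simp only [hr c]
  have heq : ∀ x : ℝ, x ≠ 0 → 1 + a*x + a*x^2 + x^3 = 0 →
      F (i-1) * x^(i-1) + F (j-1) * x^(j-1) + F (k-1) * x^(k-1) = 0 := by
    intro x hx hroot
    have hid : (∑ m ∈ Finset.range (n+3), F m * x ^ m) * x ^ 3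
        = (1 + a * x + a * x^2 + x^3) * ∑ t ∈ Finset.range (n+6), Wv v t * x ^ t :=
      key_identity n a (Wv v) hlo hhi x
    have hsub : ({i-1, j-1, k-1} : Finset ℕ) ⊆ Finset.range (n+3) := by
      intro t ht
      simp only [Finset.mem_insert, Finset.mem_singleton] at ht
      rw [Finset.mem_range]
      rcases ht with h | h | h <;> omega
    have hzero : ∀ t ∈ Finset.range (n+3), t ∉ ({i-1, j-1, k-1} : Finset ℕ) →
        F t * x ^ t = 0 := by
      intro t htr htn
      simp only [Finset.mem_insert, Finset.mem_singleton] at htn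
      push_neg at htn
      rw [hFkept t (Finset.mem_range.mp htr) htn.1 htn.2.1 htn.2.2, zero_mul]
    have hsupp : ∑ m ∈ Finset.range (n+3), F m * x^m
        = F (i-1) * x^(i-1) + F (j-1) * x^(j-1) + F (k-1) * x^(k-1) := by
      rw [← Finset.sum_subset hsub hzero]
      rw [Finset.sum_insert (by simp; omega), Finset.sum_insert (by simp; omega),
        Finset.sum_singleton]
      ring
    rw [hsupp] at hid
    rw [hroot, zero_mul] at hid
    exact (mul_eq_zero.mp hid).resolve_right (pow_ne_zero 3 hx)
  obtain ⟨R, hRabs, hpR, hpRinv⟩ := exists_root a ha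
  have hR0 : R ≠ 0 := by intro h; rw [h] at hRabs; simp at hRabs; linarith
  have e1 := heq (-1) (by norm_num) (by ring)
  have e2 := heq R hR0 hpR
  have e3 := heq R⁻¹ (inv_ne_zero hR0) hpRinv
  obtain ⟨p, hp⟩ : ∃ p, j - 1 = (i-1) + p + 1 := ⟨j - i - 1, by omega⟩
  obtain ⟨q, hq⟩ : ∃ q, k - 1 = (i-1) + p + q + 2 := ⟨k - j - 1, by omega⟩
  rw [hp, hq] at e1 e2 e3
  obtain ⟨hα, hβ, hγ⟩ := three_eq_zero R hRabs (i-1) p q _ _ _ e1 e2 e3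
  rw [← hp] at hβ
  rw [← hq] at hγ
  have hFall : ∀ m, m < n + 3 → F m = 0 := by
    intro m hm
    by_cases h1 : m = i - 1
    · rw [h1]; exact hα
    by_cases h2 : m = j - 1
    · rw [h2]; exact hβ
    by_cases h3 : m = k - 1
    · rw [h3]; exact hγ
    exact hFkept m hm h1 h2 h3
  have hWz : ∀ t, Wv v t = 0 := by
    intro t
    induction t using Nat.strong_induction_on with
    | _ t ih =>
      rcases lt_or_ge t 3 with h | h
      · exact hlo t h
      rcases lt_or_ge t (n+3) with h2 | h2
      · have hFm := hFall (t-3) (by omega)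
        simp only [hF] at hFm
        have et3 : t - 3 + 3 = t := by omega
        have et2 : t - 3 + 2 = t - 1 := by omega
        have et1 : t - 3 + 1 = t - 2 := by omega
        rw [et3, et2, et1] at hFm
        rw [ih (t-1) (by omega), ih (t-2) (by omega), ih (t-3) (by omega)] at hFm
        linarith
      · exact hhi t h2
  funext c
  have hc := hWz ((c:ℕ) + 3)
  rw [Wv, dif_pos (by omega)] at hc
  simpa using hc
end

section
/- Let a be a real number with a = 3 or a > 5, and let n ≥ 1 be an integer. Then the n columns of B_n(a,1), regarded as vectors in ℂ^{n+3}, are linearly independent, and every nonzero complex linear combination of these columns has at least 4 nonzero entries. -/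
open Finset

/-- The complex entries of `B_n(a,1)` as a function of natural indices. -/
noncomputable def bc (a : ℝ) (i j : ℕ) : ℂ :=
  if i = j then 1 else if i = j + 1 then -(a : ℂ)
  else if i = j + 2 then (a : ℂ) else if i = j + 3 then -1 else 0

lemma hB {n : ℕ} (hn : 1 ≤ n) (a : ℝ) (i : Fin (n + 3)) (j : Fin n) :
    ((Bmat n a i j : ℝ) : ℂ) = bc a (i : ℕ) (j : ℕ) := by
  have hi := i.isLt
  have hj := j.isLt
  simp only [Bmat, Eent, Matrix.of_apply, bc]
  split_ifs <;> first | (push_cast; ring1) | (exfalso; omega)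

lemma pick_sum (m : ℕ) (F : ℕ → ℂ) (k : ℕ) :
    ∑ j ∈ range m, (if j = k then F j else 0) = if k < m then F k else 0 := by
  rw [Finset.sum_ite_eq' (range m) k F]
  simp [Finset.mem_range]

lemma shift_sum_s13 (m s : ℕ) (F : ℕ → ℂ) (k : ℕ) :
    ∑ j ∈ range m, (if j + s = k then F j else 0)
      = if s ≤ k ∧ k - s < m then F (k - s) else 0 := by
  split_ifs with h
  · rw [Finset.sum_eq_single (k - s)]
    · rw [if_pos (by omega)]
    · intro b _ hb; rw [if_neg (by omega)]
    · intro hmem; exact absurd (Finset.mem_range.mpr h.2) hmem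
  · apply Finset.sum_eq_zero
    intro j hj
    rw [if_neg]
    have := Finset.mem_range.mp hj
    omega

lemma bc_col (a : ℝ) (g : ℕ → ℂ) (i j : ℕ) :
    g i * bc a i j = (if i = j then g i else 0) + (if i = j+1 then g i * (-(a:ℂ)) else 0)
      + (if i = j+2 then g i * (a:ℂ) else 0) + (if i = j+3 then g i * (-1:ℂ) else 0) := by
  unfold bc; split_ifs <;> first | ring1 | (exfalso; omega)

lemma bc_row (a : ℝ) (F : ℕ → ℂ) (i j : ℕ) :
    F j * bc a i j = (if j = i then F j else 0) + (if j + 1 = i then F j * (-(a:ℂ)) else 0)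
      + (if j + 2 = i then F j * (a:ℂ) else 0) + (if j + 3 = i then F j * (-1:ℂ) else 0) := by
  unfold bc; split_ifs <;> first | ring1 | (exfalso; omega)

lemma colsum (a : ℝ) (g : ℕ → ℂ) (m j : ℕ) (hj : j + 3 < m) :
    ∑ i ∈ range m, g i * bc a i j
      = g j - a * g (j+1) + a * g (j+2) - g (j+3) := by
  simp only [bc_col, Finset.sum_add_distrib, pick_sum]
  rw [if_pos (by omega), if_pos (by omega), if_pos (by omega), if_pos (by omega)]
  ring

lemma rowsum (a : ℝ) (F : ℕ → ℂ) (m k : ℕ) :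
    ∑ j ∈ range m, F j * bc a k j
      = (if k < m then F k else 0)
        + (if 1 ≤ k ∧ k - 1 < m then F (k-1) * (-(a:ℂ)) else 0)
        + (if 2 ≤ k ∧ k - 2 < m then F (k-2) * (a:ℂ) else 0)
        + (if 3 ≤ k ∧ k - 3 < m then F (k-3) * (-1:ℂ) else 0) := by
  simp only [bc_row, Finset.sum_add_distrib, pick_sum, shift_sum_s13]

lemma count_lemma {m : ℕ} (y g1 g2 : Fin m → ℂ)
    (T : Finset (Fin m)) (hmem : ∀ i ∈ T, y i ≠ 0)
    (e0 : ∑ i ∈ T, y i = 0)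
    (e1 : ∑ i ∈ T, g1 i * y i = 0)
    (e2 : ∑ i ∈ T, g2 i * y i = 0)
    (hinj : ∀ p ∈ T, ∀ q ∈ T, p ≠ q → g1 p ≠ g1 q)
    (hdet : ∀ p ∈ T, ∀ q ∈ T, ∀ r ∈ T, p ≠ q → p ≠ r → q ≠ r →
      (g1 q * g2 r - g1 r * g2 q) - (g1 p * g2 r - g1 r * g2 p)
        + (g1 p * g2 q - g1 q * g2 p) ≠ 0)
    (hcard : T.card ≤ 3) : T = ∅ := by
  by_contra hne
  have h1 : 1 ≤ T.card := Finset.card_pos.mpr (Finset.nonempty_iff_ne_empty.mpr hne)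
  have hc : T.card = 1 ∨ T.card = 2 ∨ T.card = 3 := by omega
  rcases hc with h | h | h
  · obtain ⟨x, rfl⟩ := Finset.card_eq_one.mp h
    rw [Finset.sum_singleton] at e0
    exact hmem x (Finset.mem_singleton_self x) e0
  · obtain ⟨x, z, hxz, rfl⟩ := Finset.card_eq_two.mp h
    have hx : x ∈ ({x, z} : Finset (Fin m)) := by simp
    have hz' : z ∈ ({x, z} : Finset (Fin m)) := by simp
    rw [Finset.sum_insert (by simpa using hxz), Finset.sum_singleton] at e0 e1
    have hg : g1 x ≠ g1 z := hinj x hx z hz' hxz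
    have hzero : (g1 x - g1 z) * y x = 0 := by linear_combination e1 - g1 z * e0
    rcases mul_eq_zero.mp hzero with h' | h'
    · exact hg (by linear_combination h')
    · exact hmem x hx h'
  · obtain ⟨x, z, w, hxz, hxw, hzw, rfl⟩ := Finset.card_eq_three.mp h
    have hx : x ∈ ({x, z, w} : Finset (Fin m)) := by simp
    have hz' : z ∈ ({x, z, w} : Finset (Fin m)) := by simp
    have hw' : w ∈ ({x, z, w} : Finset (Fin m)) := by simp
    rw [Finset.sum_insert (by simp [hxz, hxw]), Finset.sum_insert (by simpa using hzw),
      Finset.sum_singleton] at e0 e1 e2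
    have hΔ := hdet x hx z hz' w hw' hxz hxw hzw
    have hzero : ((g1 z * g2 w - g1 w * g2 z) - (g1 x * g2 w - g1 w * g2 x)
        + (g1 x * g2 z - g1 z * g2 x)) * y x = 0 := by
      linear_combination (g1 z * g2 w - g1 w * g2 z) * e0 - (g2 w - g2 z) * e1
        + (g1 w - g1 z) * e2
    rcases mul_eq_zero.mp hzero with h' | h'
    · exact hΔ h'
    · exact hmem x hx h'

lemma coeffzero (a : ℝ) (t : ℂ) (h : 1 - (a:ℂ) * t + (a:ℂ) * t^2 - t^3 = 0) (k : ℕ) :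
    t^k - (a:ℂ) * t^(k+1) + (a:ℂ) * t^(k+2) - t^(k+3) = 0 := by
  linear_combination t^k * h

theorem stmt13 (a : ℝ) (ha : a = 3 ∨ 5 < a) (n : ℕ) (hn : 1 ≤ n) :
    LinearIndependent ℂ
        (fun j : Fin n => fun i : Fin (n + 3) => ((Bmat n a i j : ℝ) : ℂ)) ∧
      ∀ lam : Fin n → ℂ,
        (fun i : Fin (n + 3) => ∑ j, lam j * ((Bmat n a i j : ℝ) : ℂ)) ≠ 0 →
        4 ≤ Set.ncard {i : Fin (n + 3) | ∑ j, lam j * ((Bmat n a i j : ℝ) : ℂ) ≠ 0} := by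
  classical
  constructor
  · -- linear independence
    rw [Fintype.linearIndependent_iff]
    intro g hg j
    have hpt : ∀ i : Fin (n+3), ∑ j : Fin n, g j * bc a (i:ℕ) (j:ℕ) = 0 := by
      intro i
      have h := congrFun hg i
      simpa [Finset.sum_apply, Pi.smul_apply, smul_eq_mul, hB hn a i] using h
    set F : ℕ → ℂ := fun j => if h : j < n then g ⟨j, h⟩ else 0 with hF
    have hrange : ∀ k, k < n + 3 → ∑ j ∈ range n, F j * bc a k j = 0 := by
      intro k hk
      have h := hpt ⟨k, hk⟩
      rw [← h, ← Fin.sum_univ_eq_sum_range (fun j => F j * bc a k j) n]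
      apply Finset.sum_congr rfl
      intro x _
      simp [hF, x.isLt]
    have hz : ∀ k, F k = 0 := by
      intro k
      induction k using Nat.strong_induction_on with
      | _ k ih =>
        by_cases hkn : k < n
        · have h0 := hrange k (by omega)
          rw [rowsum, if_pos hkn] at h0
          have e1 : (if 1 ≤ k ∧ k - 1 < n then F (k-1) * (-(a:ℂ)) else 0) = 0 := by
            split_ifs with h
            · rw [ih (k-1) (by omega)]; ring
            · rfl
          have e2 : (if 2 ≤ k ∧ k - 2 < n then F (k-2) * (a:ℂ) else 0) = 0 := by
            split_ifs with h
            · rw [ih (k-2) (by omega)]; ring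
            · rfl
          have e3 : (if 3 ≤ k ∧ k - 3 < n then F (k-3) * (-1:ℂ) else 0) = 0 := by
            split_ifs with h
            · rw [ih (k-3) (by omega)]; ring
            · rfl
          rw [e1, e2, e3] at h0
          simpa using h0
        · simp only [hF]
          rw [dif_neg hkn]
    have h := hz (j : ℕ)
    simp only [hF] at h
    rwa [dif_pos j.isLt, Fin.eta] at h
  · -- support at least 4
    intro lam hy
    set y : Fin (n+3) → ℂ := fun i => ∑ j, lam j * ((Bmat n a i j : ℝ) : ℂ) with hydef
    have hy' : y ≠ 0 := hy
    by_contra hlt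
    push_neg at hlt
    set T : Finset (Fin (n+3)) := Finset.univ.filter (fun i => y i ≠ 0) with hTdef
    have hset : {i : Fin (n + 3) | ∑ j, lam j * ((Bmat n a i j : ℝ) : ℂ) ≠ 0} = (↑T : Set (Fin (n+3))) := by
      ext i; simp [hTdef, hydef]
    rw [hset, Set.ncard_coe_finset] at hlt
    have hcard : T.card ≤ 3 := by omega
    have hmem : ∀ i ∈ T, y i ≠ 0 := by
      intro i hi
      exact (Finset.mem_filter.mp hi).2
    -- weighted sums
    have wsum : ∀ g : ℕ → ℂ, ∑ i ∈ T, g (i:ℕ) * y i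
        = ∑ j : Fin n, lam j *
            (g (j:ℕ) - (a:ℂ) * g ((j:ℕ)+1) + (a:ℂ) * g ((j:ℕ)+2) - g ((j:ℕ)+3)) := by
      intro g
      have h1 : ∑ i ∈ T, g (i:ℕ) * y i = ∑ i : Fin (n+3), g (i:ℕ) * y i := by
        rw [hTdef]
        exact Finset.sum_filter_of_ne (fun x _ hx => right_ne_zero_of_mul hx)
      rw [h1]
      have h2 : ∀ i : Fin (n+3), g (i:ℕ) * y i
          = ∑ j : Fin n, lam j * (g (i:ℕ) * bc a (i:ℕ) (j:ℕ)) := by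
        intro i
        rw [hydef]
        simp only [Finset.mul_sum]
        apply Finset.sum_congr rfl
        intro j _
        rw [hB hn a i j]; ring
      simp only [h2]
      rw [Finset.sum_comm]
      apply Finset.sum_congr rfl
      intro j _
      rw [← Finset.mul_sum]
      congr 1
      have hj3 : (j:ℕ) + 3 < n + 3 := by have := j.isLt; omega
      rw [← colsum a g (n+3) (j:ℕ) hj3,
        ← Fin.sum_univ_eq_sum_range (fun i => g i * bc a i (j:ℕ)) (n+3)]
    have E0 : ∑ i ∈ T, y i = 0 := by
      have h := wsum (fun _ => 1)
      simp only [one_mul] at h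
      rw [h]
      apply Finset.sum_eq_zero; intro j _; ring
    -- now case split on a
    rcases ha with ha3 | ha5
    · -- a = 3
      subst ha3
      have E1 : ∑ i ∈ T, ((i:ℕ):ℂ) * y i = 0 := by
        rw [wsum (fun k => (k:ℂ))]
        apply Finset.sum_eq_zero; intro j _
        have : (((j:ℕ):ℂ) - ((3:ℝ):ℂ) * (((j:ℕ)+1 : ℕ):ℂ) + ((3:ℝ):ℂ) * (((j:ℕ)+2 : ℕ):ℂ)
            - (((j:ℕ)+3 : ℕ):ℂ)) = 0 := by push_cast; ring
        rw [this, mul_zero]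
      have E2 : ∑ i ∈ T, ((i:ℕ):ℂ)^2 * y i = 0 := by
        rw [wsum (fun k => (k:ℂ)^2)]
        apply Finset.sum_eq_zero; intro j _
        have : ((((j:ℕ):ℂ))^2 - ((3:ℝ):ℂ) * ((((j:ℕ)+1 : ℕ):ℂ))^2
            + ((3:ℝ):ℂ) * ((((j:ℕ)+2 : ℕ):ℂ))^2 - ((((j:ℕ)+3 : ℕ):ℂ))^2) = 0 := by
          push_cast; ring
        rw [this, mul_zero]
      have hTempty : T = ∅ := by
        apply count_lemma y (fun i => ((i:ℕ):ℂ)) (fun i => ((i:ℕ):ℂ)^2) T hmem E0 E1 E2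
        · intro p _ q _ hpq h
          exact hpq (Fin.ext (by exact_mod_cast h))
        · intro p _ q _ r _ hpq hpr hqr
          have hu : ((p:ℕ):ℂ) ≠ ((q:ℕ):ℂ) := fun h => hpq (Fin.ext (by exact_mod_cast h))
          have hv : ((q:ℕ):ℂ) ≠ ((r:ℕ):ℂ) := fun h => hqr (Fin.ext (by exact_mod_cast h))
          have hw : ((r:ℕ):ℂ) ≠ ((p:ℕ):ℂ) := fun h => hpr (Fin.ext (by exact_mod_cast h.symm))
          have key : (((q:ℕ):ℂ) * ((r:ℕ):ℂ)^2 - ((r:ℕ):ℂ) * ((q:ℕ):ℂ)^2)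
              - (((p:ℕ):ℂ) * ((r:ℕ):ℂ)^2 - ((r:ℕ):ℂ) * ((p:ℕ):ℂ)^2)
              + (((p:ℕ):ℂ) * ((q:ℕ):ℂ)^2 - ((q:ℕ):ℂ) * ((p:ℕ):ℂ)^2)
              = (((p:ℕ):ℂ) - ((q:ℕ):ℂ)) * ((((q:ℕ):ℂ) - ((r:ℕ):ℂ)) * (((r:ℕ):ℂ) - ((p:ℕ):ℂ))) := by
            ring
          rw [key]
          exact mul_ne_zero (sub_ne_zero.mpr hu)
            (mul_ne_zero (sub_ne_zero.mpr hv) (sub_ne_zero.mpr hw))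
        · exact hcard
      obtain ⟨i, hi⟩ := Function.ne_iff.mp hy'
      have hiT : i ∈ T := Finset.mem_filter.mpr ⟨Finset.mem_univ i, hi⟩
      rw [hTempty] at hiT
      exact absurd hiT (Finset.notMem_empty i)
    · -- 5 < a
      set sq : ℝ := Real.sqrt ((a-1)^2 - 4) with hsqdef
      have hsqnn : 0 ≤ sq := Real.sqrt_nonneg _
      have hsq : sq^2 = (a-1)^2 - 4 := Real.sq_sqrt (by nlinarith)
      set r : ℝ := ((a-1) + sq)/2 with hrdef
      have hr1 : 1 < r := by
        rw [hrdef]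
        nlinarith
      have hrr : r^2 - (a-1)*r + 1 = 0 := by
        rw [hrdef]
        linear_combination hsq / 4
      have hr0 : r ≠ 0 := by nlinarith
      set t : ℂ := (r : ℂ) with htdef
      have ht0 : t ≠ 0 := by
        rw [htdef]
        exact_mod_cast hr0
      have htq : t^2 - ((a:ℂ)-1)*t + 1 = 0 := by
        rw [htdef]
        exact_mod_cast congrArg (fun x : ℝ => (x:ℂ)) hrr
      have hroot1 : 1 - (a:ℂ) * t + (a:ℂ) * t^2 - t^3 = 0 := by
        linear_combination (1 - t) * htq
      have hroot2 : 1 - (a:ℂ) * t⁻¹ + (a:ℂ) * (t⁻¹)^2 - (t⁻¹)^3 = 0 := by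
        field_simp
        linear_combination (t - 1) * htq
      have E1 : ∑ i ∈ T, t^(i:ℕ) * y i = 0 := by
        rw [wsum (fun k => t^k)]
        apply Finset.sum_eq_zero; intro j _
        rw [coeffzero a t hroot1 (j:ℕ), mul_zero]
      have E2 : ∑ i ∈ T, (t⁻¹)^(i:ℕ) * y i = 0 := by
        rw [wsum (fun k => (t⁻¹)^k)]
        apply Finset.sum_eq_zero; intro j _
        rw [coeffzero a t⁻¹ hroot2 (j:ℕ), mul_zero]
      have hpowinj : ∀ p q : ℕ, t ^ p = t ^ q → p = q := by
        intro p q hpq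
        have hr : r ^ p = r ^ q := by
          have h2 : ((r:ℝ):ℂ)^p = ((r:ℝ):ℂ)^q := by rw [← htdef]; exact hpq
          exact_mod_cast h2
        by_contra hne
        rcases Nat.lt_or_ge p q with h | h
        · exact absurd hr (ne_of_lt (pow_lt_pow_right₀ hr1 h))
        · have h' : q < p := by omega
          exact absurd hr.symm (ne_of_lt (pow_lt_pow_right₀ hr1 h'))
      have hTempty : T = ∅ := by
        apply count_lemma y (fun i => t^(i:ℕ)) (fun i => (t⁻¹)^(i:ℕ)) T hmem E0 E1 E2
        · intro p _ q _ hpq h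
          exact hpq (Fin.ext (hpowinj _ _ h))
        · intro p _ q _ r' _ hpq hpr hqr
          set U := t^(p:ℕ) with hU
          set V := t^(q:ℕ) with hV
          set W := t^(r':ℕ) with hW
          have hU0 : U ≠ 0 := pow_ne_zero _ ht0
          have hV0 : V ≠ 0 := pow_ne_zero _ ht0
          have hW0 : W ≠ 0 := pow_ne_zero _ ht0
          have hUV : U ≠ V := fun h => hpq (Fin.ext (hpowinj _ _ h))
          have hVW : V ≠ W := fun h => hqr (Fin.ext (hpowinj _ _ h))
          have hWU : W ≠ U := fun h => hpr (Fin.ext (hpowinj _ _ h.symm))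
          have hinvU : (t⁻¹)^(p:ℕ) = U⁻¹ := by rw [inv_pow, hU]
          have hinvV : (t⁻¹)^(q:ℕ) = V⁻¹ := by rw [inv_pow, hV]
          have hinvW : (t⁻¹)^(r':ℕ) = W⁻¹ := by rw [inv_pow, hW]
          rw [hinvU, hinvV, hinvW]
          intro hΔ
          have key : (U - V) * ((V - W) * (W - U)) = 0 := by
            have expand : (V * W⁻¹ - W * V⁻¹) - (U * W⁻¹ - W * U⁻¹) + (U * V⁻¹ - V * U⁻¹) = 0 → 
                (U - V) * ((V - W) * (W - U)) = 0 := by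
              intro h
              have h2 : ((V * W⁻¹ - W * V⁻¹) - (U * W⁻¹ - W * U⁻¹) + (U * V⁻¹ - V * U⁻¹))
                  * (U * V * W) = (U - V) * ((V - W) * (W - U)) := by
                field_simp
                ring
              rw [← h2, h, zero_mul]
            exact expand hΔ
          rcases mul_eq_zero.mp key with h' | h'
          · exact hUV (by linear_combination h')
          · rcases mul_eq_zero.mp h' with h'' | h''
            · exact hVW (by linear_combination h'')
            · exact hWU (by linear_combination h'')
        · exact hcard
      obtain ⟨i, hi⟩ := Function.ne_iff.mp hy'
      have hiT : i ∈ T := Finset.mem_filter.mpr ⟨Finset.mem_univ i, hi⟩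
      rw [hTempty] at hiT
      exact absurd hiT (Finset.notMem_empty i)
end
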